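/- arXiv:0711.3664 — 4 statements merged into one kernel-verified Lean document; each statement's English description precedes it below -/
import Mathlib

section
/- Let C > 1 and ε = min{C−1, 1/3}. There exists Δ₀ = Δ₀(ε) such that for every integer Δ > Δ₀ and every integer k > CΔ/ln Δ the following holds: for every ℓ ≥ 1, every allowed unbiasing partial coloring X of the leaves L_ℓ, and every color c ∈ [k], P_ℓ(X,c) ≤ Δ^{−ε/2}. -/
/-- Vertices of the complete rooted tree of depth `ℓ` and branching factor `Δ`:
a vertex is the path leading to it from the root, i.e. a pair of a depth `i ≤ ℓ`
and a function `Fin i → Fin Δ`. -/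
abbrev TVertex (Δ ℓ : ℕ) : Type := Σ i : Fin (ℓ + 1), Fin i.val → Fin Δ

/-- The root of the tree. -/
def troot (Δ ℓ : ℕ) : TVertex Δ ℓ := ⟨⟨0, Nat.succ_pos ℓ⟩, fun i => i.elim0⟩

/-- The `j`-th child of a vertex `v` of depth `< ℓ`. -/
def tchild {Δ ℓ : ℕ} (v : TVertex Δ ℓ) (h : v.1.val < ℓ) (j : Fin Δ) : TVertex Δ ℓ :=
  ⟨⟨v.1.val + 1, Nat.succ_lt_succ h⟩, Fin.snoc v.2 j⟩

/-- A proper `k`-coloring of the tree: adjacent (parent/child) vertices get distinct colors. -/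
def ProperColoring (Δ ℓ k : ℕ) (σ : TVertex Δ ℓ → Fin k) : Prop :=
  ∀ (v : TVertex Δ ℓ) (h : v.1.val < ℓ) (j : Fin Δ), σ v ≠ σ (tchild v h j)

/-- The leaf determined by a root-to-leaf path. -/
def leafVertex {Δ ℓ : ℕ} (f : Fin ℓ → Fin Δ) : TVertex Δ ℓ := ⟨⟨ℓ, Nat.lt_succ_self ℓ⟩, f⟩

/-- Restriction of a coloring of the tree to the leaves. -/
def leafColoring {Δ ℓ k : ℕ} (σ : TVertex Δ ℓ → Fin k) : (Fin ℓ → Fin Δ) → Fin k :=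
  fun f => σ (leafVertex f)

/-- A total leaf coloring, viewed as a partial one (no `⋆`s). -/
def toPartial {Δ ℓ k : ℕ} (X : (Fin ℓ → Fin Δ) → Fin k) : (Fin ℓ → Fin Δ) → Option (Fin k) :=
  fun f => some (X f)

/-- Probability of the event `E` under the uniform measure `μ_ℓ` on proper colorings. -/
noncomputable def treeProb (Δ ℓ k : ℕ) (E : (TVertex Δ ℓ → Fin k) → Prop) : ℝ :=
  (Nat.card {σ : TVertex Δ ℓ → Fin k // ProperColoring Δ ℓ k σ ∧ E σ} : ℝ) /
    (Nat.card {σ : TVertex Δ ℓ → Fin k // ProperColoring Δ ℓ k σ} : ℝ)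

/-- Expectation of `f` under the uniform measure `μ_ℓ` on proper colorings. -/
noncomputable def treeExp (Δ ℓ k : ℕ) (f : (TVertex Δ ℓ → Fin k) → ℝ) : ℝ :=
  (∑ σ : TVertex Δ ℓ → Fin k, Set.indicator {σ | ProperColoring Δ ℓ k σ} f σ) /
    (Nat.card {σ : TVertex Δ ℓ → Fin k // ProperColoring Δ ℓ k σ} : ℝ)

/-- `σ` agrees with the partial leaf coloring `X` on every leaf colored by `X`. -/
def AgreesOn {Δ ℓ k : ℕ} (σ : TVertex Δ ℓ → Fin k) (X : (Fin ℓ → Fin Δ) → Option (Fin k)) : Prop :=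
  ∀ (f : Fin ℓ → Fin Δ) (c : Fin k), X f = some c → leafColoring σ f = c

/-- `X` is an allowed partial coloring of the leaves. -/
def AllowedP (Δ ℓ k : ℕ) (X : (Fin ℓ → Fin Δ) → Option (Fin k)) : Prop :=
  ∃ σ, ProperColoring Δ ℓ k σ ∧ AgreesOn σ X

/-- `μ_ℓ(σ(root) = c | σ` agrees with `X` at the leaves`)`. -/
noncomputable def condProbRootP (Δ ℓ k : ℕ) (X : (Fin ℓ → Fin Δ) → Option (Fin k))
    (c : Fin k) : ℝ :=
  (Nat.card {σ : TVertex Δ ℓ → Fin k //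
      ProperColoring Δ ℓ k σ ∧ AgreesOn σ X ∧ σ (troot Δ ℓ) = c} : ℝ) /
    (Nat.card {σ : TVertex Δ ℓ → Fin k // ProperColoring Δ ℓ k σ ∧ AgreesOn σ X} : ℝ)

/-- Restriction of a vector indexed by the leaves of `T_{ℓ+1}` to the leaves below
the `j`-th child of the root. -/
def childRestrict {Δ ℓ : ℕ} {β : Sort*} (X : (Fin (ℓ + 1) → Fin Δ) → β) (j : Fin Δ) :
    (Fin ℓ → Fin Δ) → β := fun g => X (Fin.cons j g)

/-- The recursively defined quantity `P_h(X, c)`. -/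
noncomputable def Pfun (Δ k : ℕ) : (h : ℕ) → ((Fin h → Fin Δ) → Option (Fin k)) → Fin k → ℝ
  | 0, X, c =>
    match X (fun i => i.elim0) with
    | none => 1 / (k : ℝ)
    | some d => if d = c then 1 else 0
  | h + 1, X, c =>
    (∏ j : Fin Δ, (1 - Pfun Δ k h (childRestrict X j) c)) /
      ∑ d : Fin k, ∏ j : Fin Δ, (1 - Pfun Δ k h (childRestrict X j) d)

/-- Unbiasing partial colorings of the leaves of `T_ℓ` (meaningful for `ℓ ≥ 1`). -/
def Unbiasing (Δ k : ℕ) (ε : ℝ) : (ℓ : ℕ) → ((Fin ℓ → Fin Δ) → Option (Fin k)) → Prop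
  | 0, _ => True
  | 1, X => (Δ : ℝ) ^ (ε / 2) ≤ (Nat.card {c : Fin k // ∀ f, X f ≠ some c} : ℝ)
  | ℓ + 2, X =>
      (Nat.card {j : Fin Δ // ¬ Unbiasing Δ k ε (ℓ + 1) (childRestrict X j)} : ℝ) ≤
        (Δ : ℝ) ^ ((1 : ℝ) - ε)

/-- Auxiliary notion: every subtree vertex of height `≥ t` has an unbiasing restriction. -/
def HighlyUnbiasingAux (Δ k : ℕ) (ε t : ℝ) :
    (h : ℕ) → ((Fin h → Fin Δ) → Option (Fin k)) → Prop
  | 0, _ => True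
  | h + 1, X => ((t ≤ (h : ℝ) + 1) → Unbiasing Δ k ε (h + 1) X) ∧
      ∀ j : Fin Δ, HighlyUnbiasingAux Δ k ε t h (childRestrict X j)

/-- Highly unbiasing partial colorings of the leaves of `T_ℓ`: the restriction to the
leaves below `v` is unbiasing for every vertex `v` at distance `≥ εℓ` from the leaves. -/
def HighlyUnbiasing (Δ k : ℕ) (ε : ℝ) (ℓ : ℕ) (X : (Fin ℓ → Fin Δ) → Option (Fin k)) : Prop :=
  HighlyUnbiasingAux Δ k ε (ε * ℓ) ℓ X

/-- `μ↓_{c,ℓ}`: the distribution of the leaf coloring conditioned on the root color `c`. -/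
noncomputable def downDist (Δ ℓ k : ℕ) (c : Fin k) (X : (Fin ℓ → Fin Δ) → Fin k) : ℝ :=
  (Nat.card {σ : TVertex Δ ℓ → Fin k //
      ProperColoring Δ ℓ k σ ∧ σ (troot Δ ℓ) = c ∧ leafColoring σ = X} : ℝ) /
    (Nat.card {σ : TVertex Δ ℓ → Fin k // ProperColoring Δ ℓ k σ ∧ σ (troot Δ ℓ) = c} : ℝ)

/-- `μ↑_{X,ℓ}`: the distribution of the root color given the (total) leaf coloring `X`. -/
noncomputable def upDist (Δ ℓ k : ℕ) (X : (Fin ℓ → Fin Δ) → Fin k) (c : Fin k) : ℝ :=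
  condProbRootP Δ ℓ k (toPartial X) c

/-- `μ↓↑_{c,ℓ}`: sample leaves from `μ↓_{c,ℓ}`, then a root color from `μ↑`. -/
noncomputable def downUp (Δ ℓ k : ℕ) (c c' : Fin k) : ℝ :=
  ∑ X : (Fin ℓ → Fin Δ) → Fin k, downDist Δ ℓ k c X * upDist Δ ℓ k X c'

/-- Hamming distance between two leaf colorings. -/
noncomputable def leafHamming {Δ ℓ k : ℕ} (X Y : (Fin ℓ → Fin Δ) → Fin k) : ℕ :=
  Nat.card {f : Fin ℓ → Fin Δ // X f ≠ Y f}

/-- Total variation distance between two distributions on `Fin k`. -/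
noncomputable def tvDist {k : ℕ} (p q : Fin k → ℝ) : ℝ :=
  (∑ c : Fin k, |p c - q c|) / 2

/-- `ν` is a coupling of the distributions `p` and `q`. -/
def IsCoupling {α β : Type*} [Fintype α] [Fintype β] (ν : α × β → ℝ)
    (p : α → ℝ) (q : β → ℝ) : Prop :=
  (∀ z, 0 ≤ ν z) ∧ (∀ x, ∑ y : β, ν (x, y) = p x) ∧ (∀ y, ∑ x : α, ν (x, y) = q y)

section UBAux

open Finset Real Filter

variable {Δ k : ℕ}

lemma allowedP_pos_k {ℓ : ℕ} {X : (Fin ℓ → Fin Δ) → Option (Fin k)}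
    (h : AllowedP Δ ℓ k X) : 0 < k := by
  obtain ⟨σ, -, -⟩ := h
  exact (σ (troot Δ ℓ)).pos

/-- The embedding of `T_ℓ` into `T_{ℓ+1}` as the subtree below the `j`-th child of the root. -/
def liftVertex {Δ ℓ : ℕ} (j : Fin Δ) (v : TVertex Δ ℓ) : TVertex Δ (ℓ + 1) :=
  ⟨⟨v.1.val + 1, Nat.succ_lt_succ v.1.isLt⟩, Fin.cons j v.2⟩

lemma allowedP_childRestrict {ℓ : ℕ} {X : (Fin (ℓ + 1) → Fin Δ) → Option (Fin k)}
    (h : AllowedP Δ (ℓ + 1) k X) (j : Fin Δ) : AllowedP Δ ℓ k (childRestrict X j) := by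
  obtain ⟨σ, hσ, hag⟩ := h
  refine ⟨fun v => σ (liftVertex j v), ?_, ?_⟩
  · intro v hv j'
    have he : liftVertex j (tchild v hv j') =
        tchild (liftVertex j v) (Nat.succ_lt_succ hv) j' := by
      simp only [liftVertex, tchild, Fin.cons_snoc_eq_snoc_cons]
    show σ (liftVertex j v) ≠ σ (liftVertex j (tchild v hv j'))
    rw [he]
    exact hσ (liftVertex j v) (Nat.succ_lt_succ hv) j'
  · intro f c hf
    exact hag (Fin.cons j f) c hf

lemma Pfun_bounds : ∀ (h : ℕ) (X : (Fin h → Fin Δ) → Option (Fin k)),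
    AllowedP Δ h k X →
      (∀ c, 0 ≤ Pfun Δ k h X c ∧ Pfun Δ k h X c ≤ 1) ∧ (∑ c, Pfun Δ k h X c ≤ 1) := by
  intro h
  induction h with
  | zero =>
    intro X hX
    have hk : 0 < k := allowedP_pos_k hX
    have hk' : (1:ℝ) ≤ (k:ℝ) := by exact_mod_cast hk
    rcases hx : X (fun i => i.elim0) with _ | d
    · have hval : ∀ c, Pfun Δ k 0 X c = 1 / (k:ℝ) := by
        intro c; simp [Pfun, hx]
      constructor
      · intro c
        rw [hval]
        constructor
        · positivity
        · rw [div_le_one (by positivity)]; linarith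
      · simp only [hval, Finset.sum_const, Finset.card_univ, Fintype.card_fin, nsmul_eq_mul]
        rw [mul_one_div, div_self (by positivity)]
    · have hval : ∀ c, Pfun Δ k 0 X c = if d = c then 1 else 0 := by
        intro c; simp [Pfun, hx]
      constructor
      · intro c
        rw [hval]
        split <;> norm_num
      · simp only [hval]
        rw [Finset.sum_ite_eq]
        simp
  | succ h ih =>
    intro X hX
    have hch : ∀ j : Fin Δ, AllowedP Δ h k (childRestrict X j) :=
      fun j => allowedP_childRestrict hX j
    set N : Fin k → ℝ := fun d => ∏ j : Fin Δ, (1 - Pfun Δ k h (childRestrict X j) d) with hN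
    have hN0 : ∀ d, 0 ≤ N d := fun d =>
      Finset.prod_nonneg fun j _ => sub_nonneg.2 ((ih (childRestrict X j) (hch j)).1 d).2
    have hD0 : 0 ≤ ∑ d, N d := Finset.sum_nonneg fun d _ => hN0 d
    have hle : ∀ c, N c ≤ ∑ d, N d := fun c =>
      Finset.single_le_sum (fun d _ => hN0 d) (Finset.mem_univ c)
    have hP : ∀ c, Pfun Δ k (h+1) X c = N c / ∑ d, N d := fun c => rfl
    refine ⟨fun c => ⟨by rw [hP]; exact div_nonneg (hN0 c) hD0,
      by rw [hP]; exact div_le_one_of_le₀ (hle c) hD0⟩, ?_⟩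
    calc ∑ c, Pfun Δ k (h+1) X c = (∑ c, N c) / ∑ d, N d := by
          simp only [hP]; rw [Finset.sum_div]
      _ ≤ 1 := div_self_le_one _

end UBAux
section UBAux2
open Finset Real Filter

lemma ub_one_sub_sum_le_prod {ι : Type*} (s : Finset ι) (f : ι → ℝ)
    (h0 : ∀ i ∈ s, 0 ≤ f i) (h1 : ∀ i ∈ s, f i ≤ 1) :
    1 - ∑ i ∈ s, f i ≤ ∏ i ∈ s, (1 - f i) := by
  induction s using Finset.cons_induction with
  | empty => simp
  | cons a s ha ih =>
    rw [Finset.prod_cons, Finset.sum_cons]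
    have h0' : ∀ i ∈ s, 0 ≤ f i := fun i hi => h0 i (Finset.mem_cons.2 (Or.inr hi))
    have h1' : ∀ i ∈ s, f i ≤ 1 := fun i hi => h1 i (Finset.mem_cons.2 (Or.inr hi))
    have hs0 : 0 ≤ ∑ i ∈ s, f i := Finset.sum_nonneg h0'
    have ihs := ih h0' h1'
    have ha0 : 0 ≤ f a := h0 a (Finset.mem_cons_self a s)
    have ha1 : f a ≤ 1 := h1 a (Finset.mem_cons_self a s)
    have : (1 - f a) * (1 - ∑ i ∈ s, f i) ≤ (1 - f a) * ∏ i ∈ s, (1 - f i) :=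
      mul_le_mul_of_nonneg_left ihs (by linarith)
    nlinarith

lemma ub_exp_le_one_sub {δ x : ℝ} (hδ0 : 0 < δ) (hδh : δ ≤ 1/2) (hx0 : 0 ≤ x) (hxδ : x ≤ δ) :
    Real.exp (-((1 + 2*δ) * x)) ≤ 1 - x := by
  have hδ1 : δ < 1 := by linarith
  have h1 : Real.exp (-((1 + 2*δ) * δ)) ≤ 1 - δ := by
    rw [← Real.exp_log (by linarith : (0:ℝ) < 1 - δ)]
    apply Real.exp_le_exp.2
    have hne : (1:ℝ) - δ ≠ 0 := by linarith
    have hlog : Real.log (1-δ)⁻¹ ≤ (1-δ)⁻¹ - 1 :=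
      Real.log_le_sub_one_of_pos (by rw [inv_pos]; linarith)
    rw [Real.log_inv] at hlog
    have heq : (1-δ)⁻¹ - 1 = δ/(1-δ) := by field_simp; ring
    have h2 : δ/(1-δ) ≤ δ*(1+2*δ) := by
      rw [div_le_iff₀ (by linarith)]
      nlinarith [mul_nonneg (mul_nonneg hδ0.le hδ0.le) (by linarith : (0:ℝ) ≤ 1 - 2*δ)]
    rw [heq] at hlog
    nlinarith
  have hb0 : 0 ≤ x/δ := by positivity
  have ha0 : 0 ≤ 1 - x/δ := by
    rw [sub_nonneg, div_le_one hδ0]; exact hxδ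
  have hab : (1 - x/δ) + x/δ = 1 := by ring
  have hcx := convexOn_exp.2 (Set.mem_univ (0:ℝ)) (Set.mem_univ (-((1+2*δ)*δ))) ha0 hb0 hab
  simp only [smul_eq_mul, mul_zero, zero_add, Real.exp_zero, mul_one] at hcx
  have hexp_eq : x/δ * -((1+2*δ)*δ) = -((1+2*δ)*x) := by field_simp
  rw [hexp_eq] at hcx
  have h3 : x/δ * Real.exp (-((1+2*δ)*δ)) ≤ x/δ * (1-δ) := mul_le_mul_of_nonneg_left h1 hb0
  have hfin : (1 - x/δ) + x/δ*(1-δ) = 1 - x := by field_simp; ring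
  linarith

lemma ub_sum_exp_ge {ι : Type*} (S : Finset ι) (hS : S.Nonempty) (a : ι → ℝ) :
    (S.card : ℝ) * Real.exp ((∑ d ∈ S, a d) / S.card) ≤ ∑ d ∈ S, Real.exp (a d) := by
  have hcard : (0:ℝ) < S.card := by exact_mod_cast hS.card_pos
  have hmain := Real.geom_mean_le_arith_mean_weighted S (fun _ => (S.card:ℝ)⁻¹)
    (fun d => Real.exp (a d)) (fun i _ => by positivity)
    (by rw [Finset.sum_const, nsmul_eq_mul]; field_simp) (fun i _ => (Real.exp_pos _).le)
  have hL : ∏ d ∈ S, Real.exp (a d) ^ ((S.card:ℝ)⁻¹) = Real.exp ((∑ d ∈ S, a d) / S.card) := by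
    have : ∀ d ∈ S, Real.exp (a d) ^ ((S.card:ℝ)⁻¹) = Real.exp (a d * (S.card:ℝ)⁻¹) := by
      intro d _
      rw [Real.rpow_def_of_pos (Real.exp_pos _), Real.log_exp]
    rw [Finset.prod_congr rfl this, ← Real.exp_sum, ← Finset.sum_mul, div_eq_mul_inv]
  rw [hL] at hmain
  have hR : ∑ d ∈ S, (S.card:ℝ)⁻¹ * Real.exp (a d) = (∑ d ∈ S, Real.exp (a d)) * (S.card:ℝ)⁻¹ := by
    rw [← Finset.mul_sum]; ring
  rw [hR] at hmain
  calc (S.card : ℝ) * Real.exp ((∑ d ∈ S, a d) / S.card)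
      ≤ (S.card : ℝ) * ((∑ d ∈ S, Real.exp (a d)) * (S.card:ℝ)⁻¹) :=
        mul_le_mul_of_nonneg_left hmain hcard.le
    _ = ∑ d ∈ S, Real.exp (a d) := by field_simp

end UBAux2
section UBAux3
open Finset Real Filter

lemma ub_base_bound {Δ k : ℕ} {ε : ℝ} (hε0 : 0 ≤ ε) (hΔ1 : 1 ≤ Δ) (hk2 : 2 ≤ k)
    (X : (Fin 1 → Fin Δ) → Option (Fin k)) (hA : AllowedP Δ 1 k X)
    (hU : Unbiasing Δ k ε 1 X) (c : Fin k) :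
    Pfun Δ k 1 X c ≤ (Δ:ℝ) ^ (-(ε/2)) := by
  classical
  have hΔ1' : (1:ℝ) ≤ (Δ:ℝ) := by exact_mod_cast hΔ1
  have hk0 : (0:ℝ) < k := by positivity
  have hq : (0:ℝ) < 1 - 1/(k:ℝ) := by
    have : (1:ℝ)/(k:ℝ) ≤ 1/2 := by
      apply one_div_le_one_div_of_le <;> [norm_num; exact_mod_cast hk2]
    linarith
  set F : Fin Δ → Fin k → ℝ := fun j d => 1 - Pfun Δ k 0 (childRestrict X j) d with hF
  have hch : ∀ j : Fin Δ, AllowedP Δ 0 k (childRestrict X j) :=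
    fun j => allowedP_childRestrict hA j
  have hF01 : ∀ j d, 0 ≤ F j d ∧ F j d ≤ 1 := by
    intro j d
    obtain ⟨h1, h2⟩ := (Pfun_bounds 0 (childRestrict X j) (hch j)).1 d
    exact ⟨by simp [hF]; linarith, by simp [hF]; linarith⟩
  have hPval : ∀ d, Pfun Δ k 1 X d = (∏ j, F j d) / ∑ d', ∏ j, F j d' := fun d => rfl
  set Stars : Finset (Fin Δ) :=
    univ.filter (fun j => X (Fin.cons j (fun i => i.elim0)) = none) with hStars
  set s := Stars.card with hs
  -- value of F on stars
  have hFstar : ∀ j ∈ Stars, ∀ d, F j d = 1 - 1/(k:ℝ) := by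
    intro j hj d
    have hx : X (Fin.cons j (fun i => i.elim0)) = none := (Finset.mem_filter.1 hj).2
    simp only [hF]
    have : Pfun Δ k 0 (childRestrict X j) d = 1/(k:ℝ) := by
      simp [Pfun, childRestrict, hx]
    rw [this]
  have hFnonstar : ∀ j ∉ Stars, ∀ d, (∀ f, X f ≠ some d) → F j d = 1 := by
    intro j hj d hmiss
    have hx : X (Fin.cons j (fun i => i.elim0)) ≠ none := by
      intro hcon
      exact hj (Finset.mem_filter.2 ⟨Finset.mem_univ _, hcon⟩)
    obtain ⟨e, he⟩ := Option.ne_none_iff_exists'.1 hx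
    have hed : e ≠ d := by
      intro hcon
      exact hmiss (Fin.cons j (fun i => i.elim0)) (by rw [he, hcon])
    simp only [hF]
    have : Pfun Δ k 0 (childRestrict X j) d = 0 := by
      simp [Pfun, childRestrict, he, hed]
    rw [this]; ring
  -- the products
  have hNeq : ∀ d, (∀ f, X f ≠ some d) → (∏ j, F j d) = (1 - 1/(k:ℝ))^s := by
    intro d hmiss
    rw [← Finset.prod_filter_mul_prod_filter_not univ
      (fun j => X (Fin.cons j (fun i => i.elim0)) = none) (fun j => F j d)]
    have e1 : ∏ j ∈ Stars, F j d = (1 - 1/(k:ℝ))^s := by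
      rw [Finset.prod_congr rfl (fun j hj => hFstar j hj d), Finset.prod_const]
    have e2 : ∏ j ∈ univ.filter (fun j => ¬ X (Fin.cons j (fun i => i.elim0)) = none), F j d
        = 1 := by
      apply Finset.prod_eq_one
      intro j hj
      have hj' : j ∉ Stars := by
        intro hcon
        exact (Finset.mem_filter.1 hj).2 (Finset.mem_filter.1 hcon).2
      exact hFnonstar j hj' d hmiss
    rw [e1, e2, mul_one]
  have hNc : (∏ j, F j c) ≤ (1 - 1/(k:ℝ))^s := by
    rw [← Finset.prod_filter_mul_prod_filter_not univ
      (fun j => X (Fin.cons j (fun i => i.elim0)) = none) (fun j => F j c)]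
    have e1 : ∏ j ∈ Stars, F j c = (1 - 1/(k:ℝ))^s := by
      rw [Finset.prod_congr rfl (fun j hj => hFstar j hj c), Finset.prod_const]
    rw [e1]
    have h2 : ∏ j ∈ univ.filter (fun j => ¬ X (Fin.cons j (fun i => i.elim0)) = none), F j c
        ≤ 1 :=
      Finset.prod_le_one (fun j _ => (hF01 j c).1) (fun j _ => (hF01 j c).2)
    have h3 : (0:ℝ) ≤ (1 - 1/(k:ℝ))^s := by positivity
    nlinarith [Finset.prod_nonneg (fun j (_ : j ∈ univ.filter
      (fun j => ¬ X (Fin.cons j (fun i => i.elim0)) = none)) => (hF01 j c).1)]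
  -- the missing color set
  set M : Finset (Fin k) := univ.filter (fun d => ∀ f, X f ≠ some d) with hM
  have hUcard : (Δ:ℝ) ^ (ε/2) ≤ (M.card : ℝ) := by
    have hcardeq : Nat.card {d : Fin k // ∀ f, X f ≠ some d} = M.card := by
      rw [Nat.card_eq_fintype_card, Fintype.card_subtype]
    have hU' : (Δ:ℝ) ^ (ε/2) ≤ (Nat.card {d : Fin k // ∀ f, X f ≠ some d} : ℝ) := hU
    rwa [hcardeq] at hU'
  have hMpos : (0:ℝ) < (M.card : ℝ) := by
    calc (0:ℝ) < (Δ:ℝ) ^ (ε/2) := by positivity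
      _ ≤ _ := hUcard
  -- denominator lower bound
  have hDlb : (M.card : ℝ) * (1 - 1/(k:ℝ))^s ≤ ∑ d', ∏ j, F j d' := by
    calc (M.card : ℝ) * (1 - 1/(k:ℝ))^s = ∑ d ∈ M, (1 - 1/(k:ℝ))^s := by
          rw [Finset.sum_const, nsmul_eq_mul]
      _ = ∑ d ∈ M, ∏ j, F j d :=
          (Finset.sum_congr rfl (fun d hd => (hNeq d (Finset.mem_filter.1 hd).2).symm))
      _ ≤ ∑ d', ∏ j, F j d' :=
          Finset.sum_le_sum_of_subset_of_nonneg (Finset.subset_univ M)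
            (fun d _ _ => Finset.prod_nonneg (fun j _ => (hF01 j d).1))
  have hpow : (0:ℝ) < (1 - 1/(k:ℝ))^s := by positivity
  have h1 : Pfun Δ k 1 X c ≤ (1 - 1/(k:ℝ))^s / ((M.card : ℝ) * (1 - 1/(k:ℝ))^s) := by
    rw [hPval]
    exact div_le_div₀ (by positivity) hNc (by positivity) hDlb
  have h2 : (1 - 1/(k:ℝ))^s / ((M.card : ℝ) * (1 - 1/(k:ℝ))^s) = 1 / (M.card : ℝ) := by
    rw [mul_comm, ← div_div, div_self hpow.ne']
  rw [h2] at h1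
  calc Pfun Δ k 1 X c ≤ 1 / (M.card : ℝ) := h1
    _ ≤ 1 / (Δ:ℝ)^(ε/2) := one_div_le_one_div_of_le (by positivity) hUcard
    _ = (Δ:ℝ) ^ (-(ε/2)) := by
        rw [Real.rpow_neg (by positivity), one_div]

lemma ub_step_bound {Δ k n : ℕ} {ε δ m₀ : ℝ}
    (hδ0 : 0 < δ) (hδh : δ ≤ 1/2)
    (hm0 : 0 < m₀) (hm0k : m₀ ≤ (k:ℝ) - 2*(Δ:ℝ)^((1:ℝ)-ε))
    (hfin : 2 * Real.exp ((1+2*δ) * Δ / m₀) / m₀ ≤ δ)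
    (X : (Fin (n+2) → Fin Δ) → Option (Fin k))
    (hA : AllowedP Δ (n+2) k X)
    (hU : Unbiasing Δ k ε (n+2) X)
    (IH : ∀ j : Fin Δ, Unbiasing Δ k ε (n+1) (childRestrict X j) →
      ∀ d, Pfun Δ k (n+1) (childRestrict X j) d ≤ δ)
    (c : Fin k) : Pfun Δ k (n+2) X c ≤ δ := by
  classical
  set P : Fin Δ → Fin k → ℝ := fun j d => Pfun Δ k (n+1) (childRestrict X j) d with hPdef
  have hch : ∀ j, AllowedP Δ (n+1) k (childRestrict X j) :=
    fun j => allowedP_childRestrict hA j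
  have hP01 : ∀ j d, 0 ≤ P j d ∧ P j d ≤ 1 := fun j d => (Pfun_bounds _ _ (hch j)).1 d
  have hPsum : ∀ j, ∑ d, P j d ≤ 1 := fun j => (Pfun_bounds _ _ (hch j)).2
  set Bad : Finset (Fin Δ) :=
    univ.filter (fun j => ¬ Unbiasing Δ k ε (n+1) (childRestrict X j)) with hBadDef
  have hBadcard : (Bad.card : ℝ) ≤ (Δ:ℝ)^((1:ℝ)-ε) := by
    have hcardeq :
        Nat.card {j : Fin Δ // ¬ Unbiasing Δ k ε (n+1) (childRestrict X j)} = Bad.card := by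
      rw [Nat.card_eq_fintype_card, Fintype.card_subtype]
    have hU' : (Nat.card {j : Fin Δ // ¬ Unbiasing Δ k ε (n+1) (childRestrict X j)} : ℝ)
        ≤ (Δ:ℝ)^((1:ℝ)-ε) := hU
    rwa [hcardeq] at hU'
  have hGood : ∀ j, j ∉ Bad → ∀ d, P j d ≤ δ := by
    intro j hj d
    have hu : Unbiasing Δ k ε (n+1) (childRestrict X j) := by
      by_contra hcon
      exact hj (Finset.mem_filter.2 ⟨Finset.mem_univ _, hcon⟩)
    exact IH j hu d
  set N : Fin k → ℝ := fun d => ∏ j : Fin Δ, (1 - P j d) with hNdef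
  have hN0 : ∀ d, 0 ≤ N d := fun d =>
    Finset.prod_nonneg fun j _ => sub_nonneg.2 (hP01 j d).2
  have hNle1 : ∀ d, N d ≤ 1 :=
    fun d => Finset.prod_le_one (fun j _ => sub_nonneg.2 (hP01 j d).2)
      (fun j _ => by linarith [(hP01 j d).1])
  set b : Fin k → ℝ := fun d => ∑ j ∈ Bad, P j d with hbdef
  have hb0 : ∀ d, 0 ≤ b d := fun d => Finset.sum_nonneg fun j _ => (hP01 j d).1
  have hbsum : ∑ d, b d ≤ (Bad.card : ℝ) := by
    rw [Finset.sum_comm]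
    calc ∑ j ∈ Bad, ∑ d, P j d ≤ ∑ j ∈ Bad, 1 := Finset.sum_le_sum (fun j _ => hPsum j)
      _ = (Bad.card : ℝ) := by simp
  set S : Finset (Fin k) := univ.filter (fun d => b d ≤ 1/2) with hSdef
  have hScard : (k:ℝ) - 2*(Δ:ℝ)^((1:ℝ)-ε) ≤ (S.card:ℝ) := by
    set Sc : Finset (Fin k) := univ.filter (fun d => ¬ b d ≤ 1/2) with hScDef
    have hsplit : S.card + Sc.card = k := by
      rw [hSdef, hScDef, Finset.card_filter_add_card_filter_not]
      simp
    have hScb : (Sc.card : ℝ) * (1/2) ≤ ∑ d ∈ Sc, b d := by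
      have := Finset.card_nsmul_le_sum Sc b (1/2)
        (fun d hd => le_of_not_ge (Finset.mem_filter.1 hd).2)
      rwa [nsmul_eq_mul] at this
    have hScsum : ∑ d ∈ Sc, b d ≤ ∑ d, b d :=
      Finset.sum_le_sum_of_subset_of_nonneg (Finset.subset_univ Sc)
        (fun d _ _ => hb0 d)
    have hSc2 : (Sc.card : ℝ) ≤ 2*(Δ:ℝ)^((1:ℝ)-ε) := by
      nlinarith [hBadcard]
    have : (S.card : ℝ) = (k:ℝ) - (Sc.card:ℝ) := by
      have := hsplit
      push_cast [← this]
      ring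
    rw [this]
    linarith
  have hm0S : m₀ ≤ (S.card:ℝ) := le_trans hm0k hScard
  have hSpos : (0:ℝ) < (S.card:ℝ) := lt_of_lt_of_le hm0 hm0S
  have hSne : S.Nonempty := by
    rw [← Finset.card_pos]
    exact_mod_cast hSpos
  set a : Fin k → ℝ := fun d => ∑ j ∈ Badᶜ, P j d with hadef
  have ha0 : ∀ d, 0 ≤ a d := fun d => Finset.sum_nonneg fun j _ => (hP01 j d).1
  have hasum : ∑ d ∈ S, a d ≤ (Δ:ℝ) := by
    calc ∑ d ∈ S, a d ≤ ∑ d, a d :=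
          Finset.sum_le_sum_of_subset_of_nonneg (Finset.subset_univ S)
            (fun d _ _ => ha0 d)
      _ = ∑ j ∈ Badᶜ, ∑ d, P j d := Finset.sum_comm
      _ ≤ ∑ j ∈ Badᶜ, 1 := Finset.sum_le_sum fun j _ => hPsum j
      _ = (Badᶜ.card : ℝ) := by simp
      _ ≤ (Δ:ℝ) := by
          have := Finset.card_le_univ (Badᶜ)
          have h2 : (Badᶜ.card : ℕ) ≤ Δ := by simpa using this
          exact_mod_cast h2
  -- pointwise lower bound on N over S
  have hNlb : ∀ d ∈ S, (1/2) * Real.exp (-((1+2*δ) * a d)) ≤ N d := by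
    intro d hd
    have hsplit : N d = (∏ j ∈ Bad, (1 - P j d)) * ∏ j ∈ Badᶜ, (1 - P j d) :=
      (Finset.prod_mul_prod_compl Bad _).symm
    have h1 : (1:ℝ)/2 ≤ ∏ j ∈ Bad, (1 - P j d) := by
      have hw := ub_one_sub_sum_le_prod Bad (fun j => P j d)
        (fun j _ => (hP01 j d).1) (fun j _ => (hP01 j d).2)
      have hbd : b d ≤ 1/2 := (Finset.mem_filter.1 hd).2
      have : (1:ℝ) - b d ≤ ∏ j ∈ Bad, (1 - P j d) := hw
      linarith
    have h2 : Real.exp (-((1+2*δ) * a d)) ≤ ∏ j ∈ Badᶜ, (1 - P j d) := by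
      have hprod : ∏ j ∈ Badᶜ, Real.exp (-((1+2*δ) * P j d)) ≤ ∏ j ∈ Badᶜ, (1 - P j d) :=
        Finset.prod_le_prod (fun j _ => (Real.exp_pos _).le)
          (fun j hj => ub_exp_le_one_sub hδ0 hδh (hP01 j d).1
            (hGood j (Finset.mem_compl.1 hj) d))
      have heq : Real.exp (-((1+2*δ) * a d)) = ∏ j ∈ Badᶜ, Real.exp (-((1+2*δ) * P j d)) := by
        rw [← Real.exp_sum]
        congr 1
        rw [Finset.sum_neg_distrib, ← Finset.mul_sum]
      rw [heq]
      exact hprod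
    rw [hsplit]
    calc (1/2) * Real.exp (-((1+2*δ) * a d))
        ≤ (∏ j ∈ Bad, (1 - P j d)) * ∏ j ∈ Badᶜ, (1 - P j d) :=
          mul_le_mul h1 h2 (Real.exp_pos _).le
            (le_trans (by norm_num) h1)
      _ = _ := rfl
  -- sum lower bound via Jensen
  have hjensen : (S.card:ℝ) * Real.exp ((∑ d ∈ S, -((1+2*δ) * a d)) / S.card)
      ≤ ∑ d ∈ S, Real.exp (-((1+2*δ) * a d)) :=
    ub_sum_exp_ge S hSne _
  have hsum_eq : ∑ d ∈ S, -((1+2*δ) * a d) = -((1+2*δ) * ∑ d ∈ S, a d) := by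
    rw [Finset.sum_neg_distrib, ← Finset.mul_sum]
  have hexparg : -((1+2*δ) * Δ) / (S.card:ℝ) ≤ (∑ d ∈ S, -((1+2*δ) * a d)) / S.card := by
    rw [hsum_eq]
    apply div_le_div_of_nonneg_right ?_ hSpos.le
    case _ =>
      have : (1+2*δ) * ∑ d ∈ S, a d ≤ (1+2*δ) * (Δ:ℝ) :=
        mul_le_mul_of_nonneg_left hasum (by linarith)
      linarith
  have hDlb : (1/2) * ((S.card:ℝ) * Real.exp (-((1+2*δ) * Δ) / (S.card:ℝ))) ≤ ∑ d, N d := by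
    calc (1/2) * ((S.card:ℝ) * Real.exp (-((1+2*δ) * Δ) / (S.card:ℝ)))
        ≤ (1/2) * ((S.card:ℝ) * Real.exp ((∑ d ∈ S, -((1+2*δ) * a d)) / S.card)) := by
          have := Real.exp_le_exp.2 hexparg
          nlinarith [Real.exp_pos (-((1+2*δ) * Δ) / (S.card:ℝ))]
      _ ≤ (1/2) * ∑ d ∈ S, Real.exp (-((1+2*δ) * a d)) := by linarith [hjensen]
      _ = ∑ d ∈ S, (1/2) * Real.exp (-((1+2*δ) * a d)) := by rw [Finset.mul_sum]
      _ ≤ ∑ d ∈ S, N d := Finset.sum_le_sum hNlb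
      _ ≤ ∑ d, N d :=
          Finset.sum_le_sum_of_subset_of_nonneg (Finset.subset_univ S) (fun d _ _ => hN0 d)
  have hPval : Pfun Δ k (n+2) X c = N c / ∑ d, N d := rfl
  have hEpos : (0:ℝ) < (1/2) * ((S.card:ℝ) * Real.exp (-((1+2*δ) * Δ) / (S.card:ℝ))) := by
    positivity
  have hP1 : Pfun Δ k (n+2) X c
      ≤ 1 / ((1/2) * ((S.card:ℝ) * Real.exp (-((1+2*δ) * Δ) / (S.card:ℝ)))) := by
    rw [hPval]
    exact div_le_div₀ zero_le_one (hNle1 c) hEpos hDlb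
  have hsimp : 1 / ((1/2) * ((S.card:ℝ) * Real.exp (-((1+2*δ) * Δ) / (S.card:ℝ))))
      = 2 * Real.exp ((1+2*δ) * Δ / (S.card:ℝ)) / (S.card:ℝ) := by
    rw [neg_div, Real.exp_neg]
    have hexne : Real.exp ((1+2*δ) * Δ / (S.card:ℝ)) ≠ 0 := (Real.exp_pos _).ne'
    field_simp
  have hmono : 2 * Real.exp ((1+2*δ) * Δ / (S.card:ℝ)) / (S.card:ℝ)
      ≤ 2 * Real.exp ((1+2*δ) * Δ / m₀) / m₀ := by
    apply div_le_div₀ (by positivity) ?_ hm0 hm0S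
    have harg : (1+2*δ) * Δ / (S.card:ℝ) ≤ (1+2*δ) * Δ / m₀ := by
      apply div_le_div_of_nonneg_left (by positivity) hm0 hm0S
    have := Real.exp_le_exp.2 harg
    linarith
  calc Pfun Δ k (n+2) X c
      ≤ 1 / ((1/2) * ((S.card:ℝ) * Real.exp (-((1+2*δ) * Δ) / (S.card:ℝ)))) := hP1
    _ = 2 * Real.exp ((1+2*δ) * Δ / (S.card:ℝ)) / (S.card:ℝ) := hsimp
    _ ≤ 2 * Real.exp ((1+2*δ) * Δ / m₀) / m₀ := hmono
    _ ≤ δ := hfin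

end UBAux3
section UBAux4
open Finset Real Filter Topology

lemma ub_gamma_pos {C ε : ℝ} (hC : 1 < C) (hε : ε = min (C-1) (1/3)) :
    0 < 1 - 1/C - ε/2 := by
  have hε1 : ε ≤ C - 1 := hε ▸ min_le_left _ _
  have hε2 : ε ≤ 1/3 := hε ▸ min_le_right _ _
  have hεpos : 0 < ε := by rw [hε]; exact lt_min (by linarith) (by norm_num)
  have hC0 : 0 < C := by linarith
  have key : C * ε < 2*(C-1) := by
    rcases le_or_gt C 2 with h | h
    · nlinarith [mul_nonneg (by linarith : (0:ℝ) ≤ 2 - C) hεpos.le]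
    · nlinarith
  have hrw : 1 - 1/C - ε/2 = (2*(C-1) - C*ε)/(2*C) := by field_simp
  rw [hrw]
  exact div_pos (by linarith) (by linarith)

set_option maxHeartbeats 1000000 in
lemma ub_eventually_good {C ε : ℝ} (hC : 1 < C) (hε0 : 0 < ε)
    (hγ : 0 < 1 - 1/C - ε/2) :
    ∀ᶠ Δ : ℕ in atTop,
      1 ≤ Δ ∧
      ((2:ℝ) ≤ C*(Δ:ℝ)/Real.log (Δ:ℝ) ∧
      (0:ℝ) < C*(Δ:ℝ)/Real.log (Δ:ℝ) - 2*(Δ:ℝ)^((1:ℝ)-ε) ∧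
      (Δ:ℝ)^(-(ε/2)) ≤ 1/2 ∧
      2 * Real.exp ((1 + 2*(Δ:ℝ)^(-(ε/2))) * (Δ:ℝ) /
          (C*(Δ:ℝ)/Real.log (Δ:ℝ) - 2*(Δ:ℝ)^((1:ℝ)-ε)))
        / (C*(Δ:ℝ)/Real.log (Δ:ℝ) - 2*(Δ:ℝ)^((1:ℝ)-ε)) ≤ (Δ:ℝ)^(-(ε/2))) := by
  set γ := 1 - 1/C - ε/2 with hγdef
  clear_value γ
  have hC0 : (0:ℝ) < C := by linarith
  have hreal : ∀ᶠ x : ℝ in atTop,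
      ((2:ℝ) ≤ C*x/Real.log x ∧
      (0:ℝ) < C*x/Real.log x - 2*x^((1:ℝ)-ε) ∧
      x^(-(ε/2)) ≤ 1/2 ∧
      2 * Real.exp ((1 + 2*x^(-(ε/2))) * x / (C*x/Real.log x - 2*x^((1:ℝ)-ε)))
        / (C*x/Real.log x - 2*x^((1:ℝ)-ε)) ≤ x^(-(ε/2))) := by
    have ev1 : ∀ᶠ x:ℝ in atTop, (2:ℝ) ≤ x := eventually_ge_atTop 2
    have ev2 : ∀ᶠ x:ℝ in atTop, (1:ℝ) ≤ Real.log x :=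
      Real.tendsto_log_atTop.eventually_ge_atTop 1
    have hδtend : Tendsto (fun x:ℝ => x^(-(ε/2))) atTop (𝓝 0) :=
      tendsto_rpow_neg_atTop (by positivity)
    have ev3 : ∀ᶠ x:ℝ in atTop, x^(-(ε/2)) ≤ 1/2 :=
      (hδtend.eventually_lt_const (by norm_num : (0:ℝ) < 1/2)).mono fun x h => h.le
    have hrtend : Tendsto (fun x:ℝ => 2*Real.log x/x^ε) atTop (𝓝 0) := by
      have h0 := (isLittleO_log_rpow_atTop hε0).tendsto_div_nhds_zero
      have := h0.const_mul (2:ℝ)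
      simpa [mul_div_assoc] using this
    have hqtend : Tendsto (fun x:ℝ => C - 2*Real.log x/x^ε) atTop (𝓝 C) := by
      have := tendsto_const_nhds (x := C) (f := atTop (α := ℝ)) |>.sub hrtend
      simpa using this
    have hnum : Tendsto (fun x:ℝ => 1 + 2*x^(-(ε/2))) atTop (𝓝 1) := by
      have := tendsto_const_nhds (x := (1:ℝ)) (f := atTop (α := ℝ)) |>.add
        (hδtend.const_mul (2:ℝ))
      simpa using this
    have hratio : Tendsto (fun x:ℝ => (1 + 2*x^(-(ε/2)))/(C - 2*Real.log x/x^ε))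
        atTop (𝓝 (1/C)) := by
      have := hnum.div hqtend hC0.ne'
      exact this
    have ev4 : ∀ᶠ x:ℝ in atTop,
        (1 + 2*x^(-(ε/2)))/(C - 2*Real.log x/x^ε) < 1/C + γ/2 :=
      hratio.eventually_lt_const (lt_add_of_pos_right _ (half_pos hγ))
    have ev5 : ∀ᶠ x:ℝ in atTop, 1 ≤ C - 2*Real.log x/x^ε :=
      (hqtend.eventually_const_lt hC).mono fun x h => h.le
    have ev6 : ∀ᶠ x:ℝ in atTop, Real.log x ≤ x/4 := by
      have hb := (Real.isLittleO_log_id_atTop.def (by norm_num : (0:ℝ) < 1/4))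
      filter_upwards [hb, eventually_ge_atTop (0:ℝ)] with x hx hx0
      have : |Real.log x| ≤ 1/4 * |x| := by simpa using hx
      rw [abs_of_nonneg hx0] at this
      calc Real.log x ≤ |Real.log x| := le_abs_self _
        _ ≤ 1/4 * x := this
        _ = x/4 := by ring
    have ev7u : ∀ᶠ u:ℝ in atTop, (γ/2)*u - Real.log u - 2*Real.log 2 ≥ 0 := by
      have hb := (Real.isLittleO_log_id_atTop.def (half_pos (half_pos hγ) : (0:ℝ) < γ/2/2))
      filter_upwards [hb, eventually_ge_atTop (0:ℝ),
        eventually_ge_atTop (8*Real.log 2/γ)] with u hu hu0 hu8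
      have h1 : |Real.log u| ≤ γ/2/2 * |u| := by simpa using hu
      have h2 : Real.log u ≤ γ/2/2 * u := le_trans (le_abs_self _) (by rw [abs_of_nonneg hu0] at h1; exact h1)
      have h3 : 8*Real.log 2/γ ≤ u := hu8
      have h4 : 8*Real.log 2 ≤ γ * u := by
        rw [div_le_iff₀ (by linarith : (0:ℝ) < γ)] at h3
        linarith
      nlinarith
    have ev7 : ∀ᶠ x:ℝ in atTop,
        (γ/2)*Real.log x - Real.log (Real.log x) - 2*Real.log 2 ≥ 0 :=
      Real.tendsto_log_atTop.eventually ev7u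
    filter_upwards [ev1, ev2, ev3, ev4, ev5, ev6, ev7] with x h1 h2 h3 h4 h5 h6 h7
    have hx0 : (0:ℝ) < x := by linarith
    have hx1 : (1:ℝ) < x := by linarith
    have ht0 : (0:ℝ) < Real.log x := by linarith
    set t := Real.log x with ht
    set dlt := x^(-(ε/2)) with hdlt
    set q := C - 2*t/x^ε with hqdef
    have hq1 : (1:ℝ) ≤ q := h5
    have hq0 : (0:ℝ) < q := by linarith
    have hxε : (0:ℝ) < x^ε := rpow_pos_of_pos hx0 _
    have hδ0 : (0:ℝ) < dlt := rpow_pos_of_pos hx0 _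
    have hm0eq : C*x/t - 2*x^((1:ℝ)-ε) = x/t*q := by
      rw [Real.rpow_sub hx0, Real.rpow_one, hqdef]
      field_simp
    have hxt4 : (4:ℝ) ≤ x/t := by
      rw [le_div_iff₀ ht0]; linarith
    have hm0pos : (0:ℝ) < C*x/t - 2*x^((1:ℝ)-ε) := by
      rw [hm0eq]
      have : (0:ℝ) < x/t := by positivity
      exact mul_pos this hq0
    have hm0ge4 : (4:ℝ) ≤ C*x/t - 2*x^((1:ℝ)-ε) := by
      rw [hm0eq]
      calc (4:ℝ) = 4 * 1 := by ring
        _ ≤ x/t * q := mul_le_mul hxt4 hq1 (by norm_num) (by positivity)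
    refine ⟨?_, hm0pos, h3, ?_⟩
    · have hpow0 : (0:ℝ) ≤ 2*x^((1:ℝ)-ε) := by positivity
      linarith
    · set m₀ := C*x/t - 2*x^((1:ℝ)-ε) with hm₀
      have hsuff : (1+2*dlt)*x/m₀ ≤ Real.log (dlt * m₀ / 2) := by
        have hAval : (1+2*dlt)*x/m₀ = ((1+2*dlt)/q)*t := by
          rw [hm0eq]
          field_simp
        have hlogδ : Real.log dlt = -(ε/2)*t := by
          rw [hdlt, Real.log_rpow hx0]
        have hlogm : Real.log m₀ = t - Real.log t + Real.log q := by
          rw [hm0eq, Real.log_mul (by positivity) hq0.ne',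
            Real.log_div hx0.ne' ht0.ne']
        have hlogq : 0 ≤ Real.log q := Real.log_nonneg hq1
        rw [Real.log_div (by positivity) (by norm_num),
          Real.log_mul hδ0.ne' hm0pos.ne', hAval, hlogδ, hlogm]
        have h4' : ((1+2*dlt)/q)*t ≤ (1/C + γ/2)*t :=
          mul_le_mul_of_nonneg_right (le_of_lt h4) ht0.le
        have hgid : (1/C + γ/2)*t = (1 - ε/2 - γ/2)*t := by
          rw [hγdef]; ring
        have hlog2 : (0:ℝ) < Real.log 2 := Real.log_pos (by norm_num)
        nlinarith [h7]
      have hexp := Real.exp_le_exp.2 hsuff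
      rw [Real.exp_log (div_pos (mul_pos hδ0 hm0pos) two_pos)] at hexp
      rw [div_le_iff₀ hm0pos]
      linarith [hexp]
  have hcast : Tendsto (fun Δ : ℕ => (Δ:ℝ)) atTop atTop := tendsto_natCast_atTop_atTop
  filter_upwards [eventually_ge_atTop 1, hcast.eventually hreal] with Δ hΔ h
  exact ⟨hΔ, h⟩

end UBAux4


/-- Lemma 6 of the paper: for an unbiasing allowed partial coloring of
the leaves, the root is not too biased towards any color: `P_ℓ(X,c) ≤ Δ^{-ε/2}`. -/
theorem unbiasing_root_bound (C : ℝ) (hC : 1 < C) (ε : ℝ) (hε : ε = min (C - 1) (1 / 3)) :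
    ∃ Δ₀ : ℕ, ∀ Δ : ℕ, Δ₀ < Δ → ∀ k : ℕ, C * Δ / Real.log Δ < (k : ℝ) →
      ∀ ℓ : ℕ, 1 ≤ ℓ → ∀ X : (Fin ℓ → Fin Δ) → Option (Fin k),
        AllowedP Δ ℓ k X → Unbiasing Δ k ε ℓ X →
          ∀ c : Fin k, Pfun Δ k ℓ X c ≤ (Δ : ℝ) ^ (-(ε / 2)) := by
  have hε0 : 0 < ε := by rw [hε]; exact lt_min (by linarith) (by norm_num)
  have hγ : 0 < 1 - 1/C - ε/2 := ub_gamma_pos hC hε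
  obtain ⟨Δ₀, hΔ₀⟩ := Filter.eventually_atTop.1 (ub_eventually_good hC hε0 hγ)
  refine ⟨Δ₀, fun Δ hΔ k hk ℓ hℓ => ?_⟩
  obtain ⟨hΔ1, h2, hm0pos, hδhalf, hfin⟩ := hΔ₀ Δ hΔ.le
  have hk2 : 2 ≤ k := by
    have h2k : (2:ℝ) < (k:ℝ) := lt_of_le_of_lt h2 hk
    exact_mod_cast h2k.le
  obtain ⟨n, rfl⟩ : ∃ n, ℓ = n + 1 := ⟨ℓ - 1, by omega⟩
  clear hℓ
  induction n with
  | zero =>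
    intro X hA hU c
    exact ub_base_bound hε0.le hΔ1 hk2 X hA hU c
  | succ n ihn =>
    intro X hA hU c
    have hΔpos : (0:ℝ) < (Δ:ℝ) := by
      have : (1:ℕ) ≤ Δ := hΔ1
      exact_mod_cast Nat.lt_of_lt_of_le Nat.zero_lt_one this
    have hδ0 : (0:ℝ) < (Δ:ℝ)^(-(ε/2)) := Real.rpow_pos_of_pos hΔpos _
    refine ub_step_bound hδ0 hδhalf hm0pos ?_ hfin X hA hU ?_ c
    · linarith
    · intro j hj d
      exact ihn (childRestrict X j) (allowedP_childRestrict hA j) hj d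
end

section
/- For every k ≥ 2, every ℓ ≥ 0, and any two distinct colors c₁, c₂ ∈ [k], there exists a coupling ν of μ^↓_{c₁,ℓ} and μ^↓_{c₂,ℓ} such that the expectation of H_ℓ(X,Y) for (X,Y) drawn from ν equals (Δ/(k−1))^ℓ. -/
namespace Aux

def embed {Δ ℓ : ℕ} (j : Fin Δ) (v : TVertex Δ ℓ) : TVertex Δ (ℓ+1) :=
  ⟨⟨v.1.val + 1, Nat.succ_lt_succ v.1.isLt⟩, Fin.cons j v.2⟩

def subColoring {Δ ℓ k : ℕ} (σ : TVertex Δ (ℓ+1) → Fin k) (j : Fin Δ) :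
    TVertex Δ ℓ → Fin k := fun v => σ (embed j v)

def glue {Δ ℓ k : ℕ} (c : Fin k) (p : Fin Δ → (TVertex Δ ℓ → Fin k)) :
    TVertex Δ (ℓ+1) → Fin k
  | ⟨⟨0, _⟩, _⟩ => c
  | ⟨⟨i+1, hi⟩, f⟩ => p (f 0) ⟨⟨i, Nat.lt_of_succ_lt_succ hi⟩, Fin.tail f⟩

variable {Δ ℓ k : ℕ}

lemma embed_tchild (j : Fin Δ) (v : TVertex Δ ℓ) (h : v.1.val < ℓ) (j' : Fin Δ) :
    embed j (tchild v h j') = tchild (embed j v) (Nat.succ_lt_succ h) j' := by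
  unfold embed tchild
  exact Sigma.ext rfl (heq_of_eq (Fin.cons_snoc_eq_snoc_cons _ _ _))

lemma snoc_elim0 (j : Fin Δ) :
    (Fin.snoc (fun i : Fin 0 => i.elim0) j : Fin 1 → Fin Δ)
      = Fin.cons j (fun i : Fin 0 => i.elim0) := by
  funext x
  have hx : x = 0 := Fin.ext (by omega)
  subst hx
  simp [Fin.snoc, Fin.cons]

lemma tchild_troot (j : Fin Δ) :
    tchild (troot Δ (ℓ+1)) (Nat.succ_pos ℓ) j = embed j (troot Δ ℓ) := by
  exact Sigma.ext rfl (heq_of_eq (snoc_elim0 j))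

lemma glue_embed (c : Fin k) (p : Fin Δ → (TVertex Δ ℓ → Fin k)) (j : Fin Δ)
    (v : TVertex Δ ℓ) : glue c p (embed j v) = p j v := by
  obtain ⟨⟨i, hi⟩, f⟩ := v
  simp [glue, embed, Fin.tail_cons]

lemma glue_root (c : Fin k) (p : Fin Δ → (TVertex Δ ℓ → Fin k)) :
    glue c p (troot Δ (ℓ+1)) = c := rfl

lemma sub_glue (c : Fin k) (p : Fin Δ → (TVertex Δ ℓ → Fin k)) (j : Fin Δ) :
    subColoring (glue c p) j = p j := by
  funext v; exact glue_embed c p j v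

lemma vertex_cases (v : TVertex Δ (ℓ+1)) :
    v = troot Δ (ℓ+1) ∨ ∃ (j : Fin Δ) (w : TVertex Δ ℓ), v = embed j w := by
  obtain ⟨⟨i, hi⟩, f⟩ := v
  cases i with
  | zero =>
    left
    refine Sigma.ext rfl (heq_of_eq ?_)
    funext x; exact x.elim0
  | succ i =>
    right
    exact ⟨f 0, ⟨⟨i, Nat.lt_of_succ_lt_succ hi⟩, Fin.tail f⟩,
      Sigma.ext rfl (heq_of_eq (Fin.cons_self_tail f).symm)⟩

lemma glue_sub (σ : TVertex Δ (ℓ+1) → Fin k) :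
    glue (σ (troot Δ (ℓ+1))) (subColoring σ) = σ := by
  funext v
  rcases vertex_cases v with h | ⟨j, w, h⟩ <;> subst h
  · rfl
  · exact glue_embed _ _ j w


variable {Δ ℓ k : ℕ}

lemma proper_succ_iff (σ : TVertex Δ (ℓ+1) → Fin k) :
    ProperColoring Δ (ℓ+1) k σ ↔
      (∀ j : Fin Δ, subColoring σ j (troot Δ ℓ) ≠ σ (troot Δ (ℓ+1))) ∧
      (∀ j : Fin Δ, ProperColoring Δ ℓ k (subColoring σ j)) := by
  constructor
  · intro hp
    refine ⟨fun j => ?_, fun j w h j' => ?_⟩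
    · have := hp (troot Δ (ℓ+1)) (Nat.succ_pos ℓ) j
      rw [tchild_troot] at this
      exact (Ne.symm this)
    · have := hp (embed j w) (Nat.succ_lt_succ h) j'
      rw [← embed_tchild] at this
      exact this
  · rintro ⟨h0, hs⟩ v h j'
    rcases vertex_cases v with hv | ⟨j, w, hv⟩ <;> subst hv
    · rw [tchild_troot]
      exact (h0 j').symm
    · have hw : w.1.val < ℓ := Nat.lt_of_succ_lt_succ h
      have := hs j w hw j'
      rw [subColoring, subColoring, embed_tchild j w hw j'] at this
      exact this

lemma leaf_embed (j : Fin Δ) (g : Fin ℓ → Fin Δ) :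
    embed j (leafVertex g) = leafVertex (Fin.cons j g) := rfl

lemma leafColoring_sub (σ : TVertex Δ (ℓ+1) → Fin k) (j : Fin Δ) :
    leafColoring (subColoring σ j) = childRestrict (leafColoring σ) j := rfl

lemma leafColoring_eq_iff (σ : TVertex Δ (ℓ+1) → Fin k) (X : (Fin (ℓ+1) → Fin Δ) → Fin k) :
    leafColoring σ = X ↔
      ∀ j : Fin Δ, leafColoring (subColoring σ j) = childRestrict X j := by
  constructor
  · intro h j; rw [leafColoring_sub, h]
  · intro h
    funext f
    have := congrFun (h (f 0)) (Fin.tail f)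
    rw [leafColoring_sub] at this
    simpa [childRestrict, Fin.cons_self_tail] using this

/-! ### Counting -/

noncomputable def Ncard (Δ ℓ k : ℕ) (c : Fin k) (X : (Fin ℓ → Fin Δ) → Fin k) : ℕ :=
  Nat.card {σ : TVertex Δ ℓ → Fin k //
    ProperColoring Δ ℓ k σ ∧ σ (troot Δ ℓ) = c ∧ leafColoring σ = X}

noncomputable def Zcard (Δ ℓ k : ℕ) (c : Fin k) : ℕ :=
  Nat.card {σ : TVertex Δ ℓ → Fin k // ProperColoring Δ ℓ k σ ∧ σ (troot Δ ℓ) = c}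

def fiberEquiv {α β : Type*} (P : α → Prop) (s : α → β) :
    {a // P a} ≃ Σ b : β, {a // P a ∧ s a = b} where
  toFun a := ⟨s a.1, a.1, a.2, rfl⟩
  invFun x := ⟨x.2.1, x.2.2.1⟩
  left_inv a := rfl
  right_inv := by rintro ⟨b, a, hP, rfl⟩; rfl

lemma nat_card_sigma {ι : Type*} {α : ι → Type*} [Fintype ι] [∀ i, Finite (α i)] :
    Nat.card (Sigma α) = ∑ i, Nat.card (α i) := by
  classical
  have : ∀ i, Fintype (α i) := fun i => Fintype.ofFinite (α i)
  simp [Nat.card_eq_fintype_card]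

lemma card_fiber {α β : Type*} [Finite α] [Fintype β] (P : α → Prop) (s : α → β) :
    Nat.card {a // P a} = ∑ b : β, Nat.card {a // P a ∧ s a = b} := by
  rw [Nat.card_congr (fiberEquiv P s), nat_card_sigma]

/-- The key structural equivalence at the root. -/
def colorEquiv (c : Fin k) (R : Fin Δ → (TVertex Δ ℓ → Fin k) → Prop) :
    {σ : TVertex Δ (ℓ+1) → Fin k // ProperColoring Δ (ℓ+1) k σ ∧
        σ (troot Δ (ℓ+1)) = c ∧ ∀ j, R j (subColoring σ j)} ≃
    ∀ j : Fin Δ, {τ : TVertex Δ ℓ → Fin k //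
        ProperColoring Δ ℓ k τ ∧ τ (troot Δ ℓ) ≠ c ∧ R j τ} where
  toFun σ := fun j => ⟨subColoring σ.1 j,
    ((proper_succ_iff σ.1).1 σ.2.1).2 j,
    by
      have h0 := ((proper_succ_iff σ.1).1 σ.2.1).1 j
      rw [σ.2.2.1] at h0
      exact h0,
    σ.2.2.2 j⟩
  invFun p := ⟨glue c (fun j => (p j).1), by
    refine ⟨(proper_succ_iff _).2 ⟨fun j => ?_, fun j => ?_⟩, rfl, fun j => ?_⟩
    · rw [sub_glue, glue_root]; exact (p j).2.2.1
    · rw [sub_glue]; exact (p j).2.1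
    · rw [sub_glue]; exact (p j).2.2.2⟩
  left_inv σ := by
    apply Subtype.ext
    have := glue_sub σ.1
    rw [σ.2.2.1] at this
    simpa using this
  right_inv p := by
    funext j
    apply Subtype.ext
    exact sub_glue c (fun j => (p j).1) j

lemma card_root_ne (c : Fin k) (Q : (TVertex Δ ℓ → Fin k) → Prop) :
    Nat.card {τ : TVertex Δ ℓ → Fin k //
        ProperColoring Δ ℓ k τ ∧ τ (troot Δ ℓ) ≠ c ∧ Q τ}
      = ∑ d : Fin k, if d = c then 0 else
          Nat.card {τ : TVertex Δ ℓ → Fin k //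
            ProperColoring Δ ℓ k τ ∧ τ (troot Δ ℓ) = d ∧ Q τ} := by
  rw [card_fiber (fun τ => ProperColoring Δ ℓ k τ ∧ τ (troot Δ ℓ) ≠ c ∧ Q τ)
    (fun τ => τ (troot Δ ℓ))]
  refine Finset.sum_congr rfl fun d _ => ?_
  by_cases hd : d = c
  · subst hd
    simp only [if_pos rfl]
    have : IsEmpty {a : TVertex Δ ℓ → Fin k //
        (ProperColoring Δ ℓ k a ∧ a (troot Δ ℓ) ≠ d ∧ Q a) ∧ a (troot Δ ℓ) = d} := by
      constructor
      rintro ⟨τ, ⟨_, hne, _⟩, heq⟩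
      exact hne heq
    exact Nat.card_of_isEmpty
  · rw [if_neg hd]
    apply Nat.card_congr
    apply Equiv.subtypeEquivRight
    intro τ
    constructor
    · rintro ⟨⟨h1, _, h3⟩, h4⟩; exact ⟨h1, h4, h3⟩
    · rintro ⟨h1, h4, h3⟩; exact ⟨⟨h1, h4 ▸ hd, h3⟩, h4⟩

lemma Nrec (c : Fin k) (X : (Fin (ℓ+1) → Fin Δ) → Fin k) :
    Ncard Δ (ℓ+1) k c X
      = ∏ j : Fin Δ, ∑ d : Fin k, if d = c then 0 else
          Ncard Δ ℓ k d (childRestrict X j) := by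
  unfold Ncard
  rw [Nat.card_congr (Equiv.subtypeEquivRight (q := fun σ =>
      ProperColoring Δ (ℓ+1) k σ ∧ σ (troot Δ (ℓ+1)) = c ∧
        ∀ j, leafColoring (subColoring σ j) = childRestrict X j)
    (fun σ => by rw [leafColoring_eq_iff]))]
  rw [Nat.card_congr (colorEquiv c (fun j τ => leafColoring τ = childRestrict X j))]
  rw [Nat.card_pi]
  exact Finset.prod_congr rfl fun j _ => card_root_ne c _

lemma Zrec (c : Fin k) :
    Zcard Δ (ℓ+1) k c = ∏ j : Fin Δ, ∑ d : Fin k, if d = c then 0 else Zcard Δ ℓ k d := by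
  unfold Zcard
  rw [Nat.card_congr (Equiv.subtypeEquivRight (q := fun σ =>
      ProperColoring Δ (ℓ+1) k σ ∧ σ (troot Δ (ℓ+1)) = c ∧
        ∀ j : Fin Δ, (fun _ => True) (subColoring σ j))
    (fun σ => by simp))]
  rw [Nat.card_congr (colorEquiv c (fun _ _ => True))]
  rw [Nat.card_pi]
  refine Finset.prod_congr rfl fun j _ => ?_
  rw [card_root_ne c (fun _ => True)]
  refine Finset.sum_congr rfl fun d _ => ?_
  by_cases hd : d = c
  · simp [hd]
  · rw [if_neg hd, if_neg hd]
    exact Nat.card_congr (Equiv.subtypeEquivRight (fun τ => by simp))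

lemma proper_comp (e : Fin k ≃ Fin k) (σ : TVertex Δ ℓ → Fin k) :
    ProperColoring Δ ℓ k (fun v => e (σ v)) ↔ ProperColoring Δ ℓ k σ := by
  unfold ProperColoring
  constructor
  · intro h v hv j heq
    exact h v hv j (congrArg e heq)
  · intro h v hv j heq
    exact h v hv j (e.injective heq)

lemma Zconst (c d : Fin k) : Zcard Δ ℓ k c = Zcard Δ ℓ k d := by
  unfold Zcard
  apply Nat.card_congr
  refine ⟨fun σ => ⟨fun v => Equiv.swap c d (σ.1 v),
      (proper_comp (Equiv.swap c d) σ.1).2 σ.2.1,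
      by show Equiv.swap c d (σ.1 (troot Δ ℓ)) = d; rw [σ.2.2]; exact Equiv.swap_apply_left c d⟩,
    fun τ => ⟨fun v => Equiv.swap c d (τ.1 v),
      (proper_comp (Equiv.swap c d) τ.1).2 τ.2.1,
      by show Equiv.swap c d (τ.1 (troot Δ ℓ)) = c; rw [τ.2.2]; exact Equiv.swap_apply_right c d⟩, ?_, ?_⟩ <;>
  · intro σ
    apply Subtype.ext
    funext v
    exact Equiv.swap_apply_self c d (σ.1 v)

lemma Zpos (hk : 2 ≤ k) (c : Fin k) : 0 < Zcard Δ ℓ k c := by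
  obtain ⟨c', hc'⟩ : ∃ c' : Fin k, c' ≠ c := by
    have : 1 < Fintype.card (Fin k) := by rw [Fintype.card_fin]; omega
    exact Fintype.exists_ne_of_one_lt_card this c
  have hne : Nonempty {σ : TVertex Δ ℓ → Fin k //
      ProperColoring Δ ℓ k σ ∧ σ (troot Δ ℓ) = c} := by
    refine ⟨⟨fun v => if v.1.val % 2 = 0 then c else c', ?_, by simp [troot]⟩⟩
    intro v h j
    unfold tchild
    rcases Nat.even_or_odd v.1.val with he | ho
    · have h1 : v.1.val % 2 = 0 := Nat.even_iff.1 he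
      have h2 : (v.1.val + 1) % 2 ≠ 0 := by omega
      simp only [h1, h2, if_pos rfl, if_neg h2]
      exact fun hh => hc' hh.symm
    · have h1 : v.1.val % 2 ≠ 0 := by
        have := Nat.odd_iff.1 ho; omega
      have h2 : (v.1.val + 1) % 2 = 0 := by
        have := Nat.odd_iff.1 ho; omega
      simp only [if_neg h1, h2, if_pos rfl]
      exact hc'
  exact Nat.card_pos

lemma sum_Ncard (c : Fin k) :
    ∑ X : (Fin ℓ → Fin Δ) → Fin k, Ncard Δ ℓ k c X = Zcard Δ ℓ k c := by
  unfold Zcard Ncard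
  rw [card_fiber (fun σ : TVertex Δ ℓ → Fin k =>
      ProperColoring Δ ℓ k σ ∧ σ (troot Δ ℓ) = c) (fun σ => leafColoring σ)]
  exact Finset.sum_congr rfl fun X _ =>
    Nat.card_congr (Equiv.subtypeEquivRight (fun σ => by tauto))


lemma dd_def (c : Fin k) (X : (Fin ℓ → Fin Δ) → Fin k) :
    downDist Δ ℓ k c X = (Ncard Δ ℓ k c X : ℝ) / (Zcard Δ ℓ k c : ℝ) := rfl

lemma dd_nonneg (c : Fin k) (X : (Fin ℓ → Fin Δ) → Fin k) : 0 ≤ downDist Δ ℓ k c X := by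
  rw [dd_def]; positivity

lemma dd_sum (hk : 2 ≤ k) (c : Fin k) :
    ∑ X : (Fin ℓ → Fin Δ) → Fin k, downDist Δ ℓ k c X = 1 := by
  have hZ : (0:ℝ) < (Zcard Δ ℓ k c : ℝ) := by exact_mod_cast Zpos hk c
  simp only [dd_def]
  rw [← Finset.sum_div]
  rw [div_eq_one_iff_eq hZ.ne']
  exact_mod_cast sum_Ncard c

lemma tvertex_zero (v : TVertex Δ 0) : v = troot Δ 0 := by
  obtain ⟨⟨i, hi⟩, f⟩ := v
  have : i = 0 := by omega
  subst this
  refine Sigma.ext rfl (heq_of_eq ?_)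
  funext x; exact x.elim0

lemma dd_zero (c : Fin k) (X : (Fin 0 → Fin Δ) → Fin k) :
    downDist Δ 0 k c X = if X = (fun _ => c) then 1 else 0 := by
  have hprop : ∀ σ : TVertex Δ 0 → Fin k, ProperColoring Δ 0 k σ := by
    intro σ v h j; omega
  have hZ : Zcard Δ 0 k c = 1 := by
    rw [Zcard, Nat.card_eq_one_iff_unique]
    constructor
    · constructor
      rintro ⟨σ, -, hσ⟩ ⟨τ, -, hτ⟩
      apply Subtype.ext
      funext v
      show σ v = τ v
      rw [tvertex_zero v, hσ, hτ]
    · exact ⟨⟨fun _ => c, hprop _, rfl⟩⟩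
  have hleaf : ∀ σ : TVertex Δ 0 → Fin k,
      leafColoring σ = fun _ => σ (troot Δ 0) := by
    intro σ; funext f
    rw [leafColoring, tvertex_zero (leafVertex f)]
  rw [dd_def, hZ]
  by_cases hX : X = fun _ => c
  · subst hX
    rw [if_pos rfl]
    have hN : Ncard Δ 0 k c (fun _ => c) = 1 := by
      rw [Ncard, Nat.card_eq_one_iff_unique]
      constructor
      · constructor
        rintro ⟨σ, -, hσ, -⟩ ⟨τ, -, hτ, -⟩
        apply Subtype.ext
        funext v
        show σ v = τ v
        rw [tvertex_zero v, hσ, hτ]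
      · exact ⟨⟨fun _ => c, hprop _, rfl, by rw [hleaf]⟩⟩
    rw [hN]; norm_num
  · rw [if_neg hX]
    have hN : Ncard Δ 0 k c X = 0 := by
      rw [Ncard, Nat.card_eq_zero]
      left
      constructor
      rintro ⟨σ, -, hroot, hlf⟩
      exact hX (by rw [← hlf, hleaf, hroot])
    rw [hN]; norm_num

lemma sum_ite_ne (hk : 2 ≤ k) (c : Fin k) (z : Fin k → ℝ) (hz : ∀ d, z d = z c) :
    ∑ d : Fin k, (if d = c then 0 else z d) = ((k:ℝ) - 1) * z c := by
  have : ∀ d : Fin k, (if d = c then (0:ℝ) else z d) = (if d = c then 0 else z c) := by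
    intro d; split <;> simp [hz d]
  rw [Finset.sum_congr rfl (fun d _ => this d), Finset.sum_ite, Finset.sum_const_zero,
    Finset.sum_const, zero_add, Finset.filter_ne', Finset.card_erase_of_mem (Finset.mem_univ c)]
  simp only [Finset.card_univ, Fintype.card_fin, nsmul_eq_mul]
  have : ((k - 1 : ℕ) : ℝ) = (k : ℝ) - 1 := by
    have : 1 ≤ k := by omega
    push_cast [this]; ring
  rw [this]

lemma dd_rec (hk : 2 ≤ k) (c : Fin k) (X : (Fin (ℓ+1) → Fin Δ) → Fin k) :
    downDist Δ (ℓ+1) k c X = ∏ j : Fin Δ,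
      ((∑ d : Fin k, if d = c then (0:ℝ) else downDist Δ ℓ k d (childRestrict X j)) /
        ((k:ℝ) - 1)) := by
  have hZ : (0:ℝ) < (Zcard Δ ℓ k c : ℝ) := by exact_mod_cast Zpos hk c
  have hk1 : (0:ℝ) < (k:ℝ) - 1 := by
    have : (2:ℝ) ≤ (k:ℝ) := by exact_mod_cast hk
    linarith
  have hZd : ∀ d, (Zcard Δ ℓ k d : ℝ) = (Zcard Δ ℓ k c : ℝ) := by
    intro d; exact_mod_cast Zconst d c
  rw [dd_def, Nrec, Zrec]
  push_cast
  rw [← Finset.prod_div_distrib]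
  refine Finset.prod_congr rfl fun j _ => ?_
  have hnum : ∀ d : Fin k, (if d = c then (0:ℝ) else downDist Δ ℓ k d (childRestrict X j))
      = (if d = c then (0:ℝ) else (Ncard Δ ℓ k d (childRestrict X j) : ℝ)) / (Zcard Δ ℓ k c : ℝ) := by
    intro d
    split
    · rw [zero_div]
    · rw [dd_def, hZd d]
  rw [Finset.sum_congr rfl (fun d _ => hnum d), ← Finset.sum_div]
  rw [sum_ite_ne hk c (fun d => (Zcard Δ ℓ k d : ℝ)) hZd]
  rw [div_div, mul_comm]


/-- The single-child coupling kernel. -/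
noncomputable def ker (Δ k ℓ : ℕ)
    (cpl0 : ((Fin ℓ → Fin Δ) → Fin k) × ((Fin ℓ → Fin Δ) → Fin k) → ℝ) (c₁ c₂ : Fin k)
    (z : ((Fin ℓ → Fin Δ) → Fin k) × ((Fin ℓ → Fin Δ) → Fin k)) : ℝ :=
  (cpl0 z + ∑ d : Fin k, if d = c₁ ∨ d = c₂ then 0 else
      (if z.1 = z.2 then downDist Δ ℓ k d z.1 else 0)) / ((k:ℝ) - 1)

noncomputable def cpl (Δ k : ℕ) : (ℓ : ℕ) →
    Fin k → Fin k → ((Fin ℓ → Fin Δ) → Fin k) × ((Fin ℓ → Fin Δ) → Fin k) → ℝ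
  | 0 => fun c₁ c₂ z => if z.1 = (fun _ => c₁) ∧ z.2 = (fun _ => c₂) then 1 else 0
  | ℓ+1 => fun c₁ c₂ z => ∏ j : Fin Δ,
      ker Δ k ℓ (cpl Δ k ℓ c₂ c₁) c₁ c₂ (childRestrict z.1 j, childRestrict z.2 j)

lemma cpl_succ (c₁ c₂ : Fin k) (z) :
    cpl Δ k (ℓ+1) c₁ c₂ z = ∏ j : Fin Δ,
      ker Δ k ℓ (cpl Δ k ℓ c₂ c₁) c₁ c₂ (childRestrict z.1 j, childRestrict z.2 j) := by
  rfl

def childEquiv (Δ ℓ k : ℕ) :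
    ((Fin (ℓ+1) → Fin Δ) → Fin k) ≃ (Fin Δ → ((Fin ℓ → Fin Δ) → Fin k)) where
  toFun X := fun j => childRestrict X j
  invFun p := fun f => p (f 0) (Fin.tail f)
  left_inv X := by
    funext f
    show X (Fin.cons (f 0) (Fin.tail f)) = X f
    rw [Fin.cons_self_tail]
  right_inv p := by
    funext j g
    simp [childRestrict]

lemma childRestrict_symm (p : Fin Δ → ((Fin ℓ → Fin Δ) → Fin k)) (j : Fin Δ) :
    childRestrict ((childEquiv Δ ℓ k).symm p) j = p j :=
  congrFun ((childEquiv Δ ℓ k).right_inv p) j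

def consE (Δ ℓ : ℕ) : Fin Δ × (Fin ℓ → Fin Δ) ≃ (Fin (ℓ+1) → Fin Δ) where
  toFun p := Fin.cons p.1 p.2
  invFun f := (f 0, Fin.tail f)
  left_inv p := by simp
  right_inv f := by simp

lemma leafHamming_eq_sum (X Y : (Fin ℓ → Fin Δ) → Fin k) :
    (leafHamming X Y : ℝ) = ∑ f : Fin ℓ → Fin Δ, (if X f = Y f then 0 else 1) := by
  classical
  rw [leafHamming, Nat.card_eq_fintype_card, Fintype.card_subtype, Finset.card_filter]
  push_cast
  refine Finset.sum_congr rfl fun f _ => ?_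
  by_cases h : X f = Y f <;> simp [h]

lemma leafHamming_self (X : (Fin ℓ → Fin Δ) → Fin k) : (leafHamming X X : ℝ) = 0 := by
  rw [leafHamming_eq_sum]; simp

lemma hamming_succ (X Y : (Fin (ℓ+1) → Fin Δ) → Fin k) :
    (leafHamming X Y : ℝ)
      = ∑ j : Fin Δ, (leafHamming (childRestrict X j) (childRestrict Y j) : ℝ) := by
  rw [leafHamming_eq_sum]
  rw [← Equiv.sum_comp (consE Δ ℓ) (fun f => if X f = Y f then (0:ℝ) else 1)]
  rw [Fintype.sum_prod_type]
  refine Finset.sum_congr rfl fun j _ => ?_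
  rw [leafHamming_eq_sum]
  exact Finset.sum_congr rfl fun g _ => rfl

noncomputable def qfun (Δ ℓ k : ℕ) (c : Fin k) (A : (Fin ℓ → Fin Δ) → Fin k) : ℝ :=
  (∑ d : Fin k, if d = c then (0:ℝ) else downDist Δ ℓ k d A) / ((k:ℝ) - 1)

lemma dd_rec' (hk : 2 ≤ k) (c : Fin k) (X : (Fin (ℓ+1) → Fin Δ) → Fin k) :
    downDist Δ (ℓ+1) k c X = ∏ j : Fin Δ, qfun Δ ℓ k c (childRestrict X j) :=
  dd_rec hk c X

lemma qfun_nonneg (hk : 2 ≤ k) (c : Fin k) (A : (Fin ℓ → Fin Δ) → Fin k) :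
    0 ≤ qfun Δ ℓ k c A := by
  have hk1 : (0:ℝ) ≤ (k:ℝ) - 1 := by
    have : (2:ℝ) ≤ (k:ℝ) := by exact_mod_cast hk
    linarith
  apply div_nonneg _ hk1
  apply Finset.sum_nonneg
  intro d _
  split
  · exact le_refl 0
  · exact dd_nonneg d A

lemma sum_qfun (hk : 2 ≤ k) (c : Fin k) :
    ∑ A : (Fin ℓ → Fin Δ) → Fin k, qfun Δ ℓ k c A = 1 := by
  have hk1 : (0:ℝ) < (k:ℝ) - 1 := by
    have : (2:ℝ) ≤ (k:ℝ) := by exact_mod_cast hk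
    linarith
  unfold qfun
  rw [← Finset.sum_div, Finset.sum_comm]
  have : ∀ d : Fin k, (∑ A : (Fin ℓ → Fin Δ) → Fin k,
      if d = c then (0:ℝ) else downDist Δ ℓ k d A) = if d = c then 0 else 1 := by
    intro d
    by_cases hd : d = c
    · simp [hd]
    · simp only [if_neg hd]
      exact dd_sum hk d
  rw [Finset.sum_congr rfl fun d _ => this d]
  rw [sum_ite_ne hk c (fun _ => (1:ℝ)) (fun _ => rfl), mul_one, div_self hk1.ne']

lemma split_sum {c₁ c₂ : Fin k} (hne : c₁ ≠ c₂) (g : Fin k → ℝ) :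
    ∑ d : Fin k, (if d = c₁ then (0:ℝ) else g d)
      = g c₂ + ∑ d : Fin k, (if d = c₁ ∨ d = c₂ then (0:ℝ) else g d) := by
  have key : ∀ d : Fin k, (if d = c₁ then (0:ℝ) else g d)
      = (if d = c₂ then g d else 0) + (if d = c₁ ∨ d = c₂ then (0:ℝ) else g d) := by
    intro d
    by_cases h1 : d = c₁
    · subst h1
      simp [hne]
    · by_cases h2 : d = c₂ <;> simp [h1, h2, Ne.symm hne]
  rw [Finset.sum_congr rfl fun d _ => key d, Finset.sum_add_distrib,
    Finset.sum_ite_eq' Finset.univ c₂ g, if_pos (Finset.mem_univ c₂)]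

lemma cpl_main {Δ k : ℕ} (hk : 2 ≤ k) :
    ∀ ℓ : ℕ, ∀ c₁ c₂ : Fin k, c₁ ≠ c₂ →
      (∀ z, 0 ≤ cpl Δ k ℓ c₁ c₂ z) ∧
      (∀ X, ∑ Y : (Fin ℓ → Fin Δ) → Fin k, cpl Δ k ℓ c₁ c₂ (X, Y) = downDist Δ ℓ k c₁ X) ∧
      (∀ Y, ∑ X : (Fin ℓ → Fin Δ) → Fin k, cpl Δ k ℓ c₁ c₂ (X, Y) = downDist Δ ℓ k c₂ Y) ∧
      (∑ z : ((Fin ℓ → Fin Δ) → Fin k) × ((Fin ℓ → Fin Δ) → Fin k),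
          cpl Δ k ℓ c₁ c₂ z * (leafHamming z.1 z.2 : ℝ) = ((Δ:ℝ)/((k:ℝ)-1))^ℓ) := by
  intro ℓ
  induction ℓ with
  | zero =>
    intro c₁ c₂ hne
    have hHam : (leafHamming (fun _ : Fin 0 → Fin Δ => c₁) (fun _ => c₂) : ℝ) = 1 := by
      rw [leafHamming_eq_sum]
      have hcard : Fintype.card (Fin 0 → Fin Δ) = 1 := by simp
      simp [hne, hcard]
    refine ⟨?_, ?_, ?_, ?_⟩
    · intro z; dsimp [cpl]; split <;> norm_num
    · intro X
      by_cases hX : X = fun _ => c₁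
      · simp [cpl, hX, dd_zero, Finset.sum_ite_eq']
      · simp [cpl, hX, dd_zero]
    · intro Y
      by_cases hY : Y = fun _ => c₂
      · simp [cpl, hY, dd_zero, Finset.sum_ite_eq']
      · simp [cpl, hY, dd_zero]
    · rw [Finset.sum_eq_single ((fun _ => c₁, fun _ => c₂) :
          ((Fin 0 → Fin Δ) → Fin k) × ((Fin 0 → Fin Δ) → Fin k))]
      · simp [cpl, hHam]
      · rintro ⟨X, Y⟩ - hz
        have hno : ¬(X = (fun _ => c₁) ∧ Y = (fun _ => c₂)) := by
          rintro ⟨h1, h2⟩; exact hz (by rw [h1, h2])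
        simp [cpl, hno]
      · intro h; exact absurd (Finset.mem_univ _) h
  | succ ℓ IH =>
    intro c₁ c₂ hne
    obtain ⟨ihnn, ihm1, ihm2, ihexp⟩ := IH c₂ c₁ (Ne.symm hne)
    have hk1 : (0:ℝ) < (k:ℝ) - 1 := by
      have : (2:ℝ) ≤ (k:ℝ) := by exact_mod_cast hk
      linarith
    set K := ker Δ k ℓ (cpl Δ k ℓ c₂ c₁) c₁ c₂ with hK
    have knn : ∀ z, 0 ≤ K z := by
      intro z
      rw [hK]
      unfold ker
      apply div_nonneg _ hk1.le
      apply add_nonneg (ihnn z)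
      apply Finset.sum_nonneg; intro d _
      split
      · exact le_refl 0
      · split
        · exact dd_nonneg _ _
        · exact le_refl 0
    have kmarg1 : ∀ A, (∑ B : (Fin ℓ → Fin Δ) → Fin k, K (A, B)) = qfun Δ ℓ k c₁ A := by
      intro A
      show (∑ B : (Fin ℓ → Fin Δ) → Fin k,
        (cpl Δ k ℓ c₂ c₁ (A, B) + ∑ d : Fin k, if d = c₁ ∨ d = c₂ then (0:ℝ) else
          (if A = B then downDist Δ ℓ k d A else 0)) / ((k:ℝ) - 1)) = _
      rw [← Finset.sum_div, Finset.sum_add_distrib, ihm1 A, Finset.sum_comm]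
      have hdiag : ∀ d : Fin k, (∑ B : (Fin ℓ → Fin Δ) → Fin k,
          if d = c₁ ∨ d = c₂ then (0:ℝ) else (if A = B then downDist Δ ℓ k d A else 0))
          = if d = c₁ ∨ d = c₂ then (0:ℝ) else downDist Δ ℓ k d A := by
        intro d
        by_cases hd : d = c₁ ∨ d = c₂
        · simp [hd]
        · simp only [if_neg hd]
          rw [Finset.sum_ite_eq Finset.univ A (fun _ => downDist Δ ℓ k d A),
            if_pos (Finset.mem_univ A)]
      rw [Finset.sum_congr rfl fun d _ => hdiag d]
      rw [← split_sum hne (fun d => downDist Δ ℓ k d A)]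
      rfl
    have kmarg2 : ∀ B, (∑ A : (Fin ℓ → Fin Δ) → Fin k, K (A, B)) = qfun Δ ℓ k c₂ B := by
      intro B
      show (∑ A : (Fin ℓ → Fin Δ) → Fin k,
        (cpl Δ k ℓ c₂ c₁ (A, B) + ∑ d : Fin k, if d = c₁ ∨ d = c₂ then (0:ℝ) else
          (if A = B then downDist Δ ℓ k d A else 0)) / ((k:ℝ) - 1)) = _
      rw [← Finset.sum_div, Finset.sum_add_distrib, ihm2 B, Finset.sum_comm]
      have hdiag : ∀ d : Fin k, (∑ A : (Fin ℓ → Fin Δ) → Fin k,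
          if d = c₁ ∨ d = c₂ then (0:ℝ) else (if A = B then downDist Δ ℓ k d A else 0))
          = if d = c₁ ∨ d = c₂ then (0:ℝ) else downDist Δ ℓ k d B := by
        intro d
        by_cases hd : d = c₁ ∨ d = c₂
        · simp [hd]
        · simp only [if_neg hd]
          rw [Finset.sum_ite_eq' Finset.univ B (fun A => downDist Δ ℓ k d A),
            if_pos (Finset.mem_univ B)]
      rw [Finset.sum_congr rfl fun d _ => hdiag d]
      have hor : (∑ d : Fin k, if d = c₁ ∨ d = c₂ then (0:ℝ) else downDist Δ ℓ k d B)
          = ∑ d : Fin k, if d = c₂ ∨ d = c₁ then (0:ℝ) else downDist Δ ℓ k d B :=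
        Finset.sum_congr rfl fun d _ => by
          by_cases h : d = c₁ ∨ d = c₂
          · rw [if_pos h, if_pos h.symm]
          · rw [if_neg h, if_neg (fun hh => h hh.symm)]
      rw [hor, ← split_sum (Ne.symm hne) (fun d => downDist Δ ℓ k d B)]
      rfl
    have kmass : (∑ z : ((Fin ℓ → Fin Δ) → Fin k) × ((Fin ℓ → Fin Δ) → Fin k), K z) = 1 := by
      rw [Fintype.sum_prod_type]
      rw [Finset.sum_congr rfl fun A _ => kmarg1 A]
      exact sum_qfun hk c₁
    have kexp : (∑ z : ((Fin ℓ → Fin Δ) → Fin k) × ((Fin ℓ → Fin Δ) → Fin k),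
        K z * (leafHamming z.1 z.2 : ℝ)) = ((Δ:ℝ)/((k:ℝ)-1))^ℓ / ((k:ℝ)-1) := by
      have hsplit : ∀ z : ((Fin ℓ → Fin Δ) → Fin k) × ((Fin ℓ → Fin Δ) → Fin k),
          K z * (leafHamming z.1 z.2 : ℝ)
            = (cpl Δ k ℓ c₂ c₁ z * (leafHamming z.1 z.2 : ℝ)
              + (∑ d : Fin k, if d = c₁ ∨ d = c₂ then (0:ℝ) else
                  (if z.1 = z.2 then downDist Δ ℓ k d z.1 else 0))
                * (leafHamming z.1 z.2 : ℝ)) / ((k:ℝ) - 1) := by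
        intro z
        rw [hK]
        unfold ker
        rw [div_mul_eq_mul_div, add_mul]
      rw [Finset.sum_congr rfl fun z _ => hsplit z, ← Finset.sum_div,
        Finset.sum_add_distrib, ihexp]
      have hzero : ∀ z : ((Fin ℓ → Fin Δ) → Fin k) × ((Fin ℓ → Fin Δ) → Fin k),
          (∑ d : Fin k, if d = c₁ ∨ d = c₂ then (0:ℝ) else
              (if z.1 = z.2 then downDist Δ ℓ k d z.1 else 0))
            * (leafHamming z.1 z.2 : ℝ) = 0 := by
        intro z
        by_cases hz : z.1 = z.2
        · rw [← hz, leafHamming_self z.1, mul_zero]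
        · have : (∑ d : Fin k, if d = c₁ ∨ d = c₂ then (0:ℝ) else
              (if z.1 = z.2 then downDist Δ ℓ k d z.1 else 0)) = 0 := by
            apply Finset.sum_eq_zero
            intro d _
            rw [if_neg hz]
            split <;> rfl
          rw [this, zero_mul]
      rw [Finset.sum_congr rfl fun z _ => hzero z, Finset.sum_const_zero, add_zero]
    refine ⟨?_, ?_, ?_, ?_⟩
    · intro z
      rw [cpl_succ]
      exact Finset.prod_nonneg fun j _ => knn _
    · intro X
      rw [← Equiv.sum_comp (childEquiv Δ ℓ k).symm
        (fun Y => cpl Δ k (ℓ+1) c₁ c₂ (X, Y))]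
      have h1 : ∀ q : Fin Δ → ((Fin ℓ → Fin Δ) → Fin k),
          cpl Δ k (ℓ+1) c₁ c₂ (X, (childEquiv Δ ℓ k).symm q)
            = ∏ j, K (childRestrict X j, q j) := by
        intro q
        rw [cpl_succ]
        exact Finset.prod_congr rfl fun j _ => by rw [childRestrict_symm]
      rw [Finset.sum_congr rfl fun q _ => h1 q,
        ← Fintype.prod_sum (fun j B => K (childRestrict X j, B)),
        dd_rec' hk c₁ X]
      exact Finset.prod_congr rfl fun j _ => kmarg1 (childRestrict X j)
    · intro Y
      rw [← Equiv.sum_comp (childEquiv Δ ℓ k).symm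
        (fun X => cpl Δ k (ℓ+1) c₁ c₂ (X, Y))]
      have h1 : ∀ p : Fin Δ → ((Fin ℓ → Fin Δ) → Fin k),
          cpl Δ k (ℓ+1) c₁ c₂ ((childEquiv Δ ℓ k).symm p, Y)
            = ∏ j, K (p j, childRestrict Y j) := by
        intro p
        rw [cpl_succ]
        exact Finset.prod_congr rfl fun j _ => by rw [childRestrict_symm]
      rw [Finset.sum_congr rfl fun p _ => h1 p,
        ← Fintype.prod_sum (fun j A => K (A, childRestrict Y j)),
        dd_rec' hk c₂ Y]
      exact Finset.prod_congr rfl fun j _ => kmarg2 (childRestrict Y j)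
    · set W := ((Equiv.arrowProdEquivProdArrow (Fin Δ)
        (fun _ => (Fin ℓ → Fin Δ) → Fin k) (fun _ => (Fin ℓ → Fin Δ) → Fin k)).trans
        (Equiv.prodCongr (childEquiv Δ ℓ k).symm (childEquiv Δ ℓ k).symm)) with hW
      rw [← Equiv.sum_comp W (fun z => cpl Δ k (ℓ+1) c₁ c₂ z * (leafHamming z.1 z.2 : ℝ))]
      have hWr : ∀ r : Fin Δ → (((Fin ℓ → Fin Δ) → Fin k) × ((Fin ℓ → Fin Δ) → Fin k)),
          cpl Δ k (ℓ+1) c₁ c₂ (W r) * (leafHamming (W r).1 (W r).2 : ℝ)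
            = (∏ j, K (r j)) * ∑ i, (leafHamming (r i).1 (r i).2 : ℝ) := by
        intro r
        show cpl Δ k (ℓ+1) c₁ c₂
            ((childEquiv Δ ℓ k).symm (fun j => (r j).1), (childEquiv Δ ℓ k).symm (fun j => (r j).2))
            * (leafHamming ((childEquiv Δ ℓ k).symm (fun j => (r j).1))
                ((childEquiv Δ ℓ k).symm (fun j => (r j).2)) : ℝ) = _
        rw [cpl_succ, hamming_succ]
        dsimp only
        refine congrArg₂ (· * ·) ?_ ?_
        · refine Finset.prod_congr rfl fun j _ => ?_
          rw [childRestrict_symm, childRestrict_symm]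
        · refine Finset.sum_congr rfl fun i _ => ?_
          rw [childRestrict_symm, childRestrict_symm]
      rw [Finset.sum_congr rfl fun r _ => hWr r]
      have hml : ∀ r : Fin Δ → (((Fin ℓ → Fin Δ) → Fin k) × ((Fin ℓ → Fin Δ) → Fin k)),
          (∏ j, K (r j)) * (∑ i, (leafHamming (r i).1 (r i).2 : ℝ))
            = ∑ i, (∏ j, K (r j)) * (leafHamming (r i).1 (r i).2 : ℝ) := by
        intro r; rw [Finset.mul_sum]
      rw [Finset.sum_congr rfl fun r _ => hml r, Finset.sum_comm]
      have key : ∀ i : Fin Δ,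
          (∑ r : Fin Δ → (((Fin ℓ → Fin Δ) → Fin k) × ((Fin ℓ → Fin Δ) → Fin k)),
            (∏ j, K (r j)) * (leafHamming (r i).1 (r i).2 : ℝ))
          = ((Δ:ℝ)/((k:ℝ)-1))^ℓ / ((k:ℝ)-1) := by
        intro i
        have step1 : ∀ r : Fin Δ → (((Fin ℓ → Fin Δ) → Fin k) × ((Fin ℓ → Fin Δ) → Fin k)),
            (∏ j, K (r j)) * (leafHamming (r i).1 (r i).2 : ℝ)
              = ∏ j, (K (r j) * if j = i then (leafHamming (r j).1 (r j).2 : ℝ) else 1) := by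
          intro r
          rw [Finset.prod_mul_distrib,
            Finset.prod_ite_eq' Finset.univ i (fun j => (leafHamming (r j).1 (r j).2 : ℝ)),
            if_pos (Finset.mem_univ i)]
        rw [Finset.sum_congr rfl fun r _ => step1 r,
          ← Fintype.prod_sum (fun j z => K z * if j = i then (leafHamming z.1 z.2 : ℝ) else 1)]
        have step2 : ∀ j : Fin Δ,
            (∑ z : ((Fin ℓ → Fin Δ) → Fin k) × ((Fin ℓ → Fin Δ) → Fin k),
              K z * if j = i then (leafHamming z.1 z.2 : ℝ) else 1)
            = if j = i then ((Δ:ℝ)/((k:ℝ)-1))^ℓ / ((k:ℝ)-1) else 1 := by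
          intro j
          by_cases hj : j = i
          · simp only [hj, if_pos rfl]
            exact kexp
          · simp only [if_neg hj, mul_one]
            exact kmass
        rw [Finset.prod_congr rfl fun j _ => step2 j,
          Finset.prod_ite_eq' Finset.univ i (fun _ => ((Δ:ℝ)/((k:ℝ)-1))^ℓ / ((k:ℝ)-1)),
          if_pos (Finset.mem_univ i)]
      rw [Finset.sum_congr rfl fun i _ => key i, Finset.sum_const, Finset.card_univ,
        Fintype.card_fin, nsmul_eq_mul]
      rw [pow_succ]
      field_simp

end Aux

/-- Lemma 11 of the paper: for any two distinct colors `c₁ c₂` there is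
a coupling `ν` of `μ↓_{c₁,ℓ}` and `μ↓_{c₂,ℓ}` whose expected Hamming distance at the
leaves is exactly `(Δ/(k-1))^ℓ`. -/
theorem downward_coupling (Δ k : ℕ) (hΔ : 2 ≤ Δ) (hk : 2 ≤ k) (ℓ : ℕ)
    (c₁ c₂ : Fin k) (hne : c₁ ≠ c₂) :
    ∃ ν : ((Fin ℓ → Fin Δ) → Fin k) × ((Fin ℓ → Fin Δ) → Fin k) → ℝ,
      IsCoupling ν (downDist Δ ℓ k c₁) (downDist Δ ℓ k c₂) ∧
      ∑ q : ((Fin ℓ → Fin Δ) → Fin k) × ((Fin ℓ → Fin Δ) → Fin k),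
          ν q * (leafHamming q.1 q.2 : ℝ) = ((Δ : ℝ) / ((k : ℝ) - 1)) ^ ℓ := by
  obtain ⟨hnn, hm1, hm2, hexp⟩ := Aux.cpl_main (Δ := Δ) hk ℓ c₁ c₂ hne
  exact ⟨Aux.cpl Δ k ℓ c₁ c₂, ⟨hnn, hm1, hm2⟩, hexp⟩
end

section
/- Let G be a finite graph with a boundary condition (a fixed proper partial k-coloring of a subset of vertices), let μ be the uniform distribution over proper k-colorings of G consistent with the boundary condition (assumed nonempty), let u be an unfixed vertex, and let μ_u be the marginal of μ at u. For a color c with μ_u(c) < 1, let μ^c_u be the marginal at u in the graph obtained from G by attaching a new vertex adjacent only to u that is fixed to color c (equivalently, μ_u conditioned on the color at u being different from c). Then for any two colors c₁, c₂ with μ_u(c₁) < 1 and μ_u(c₂) < 1: d_TV[μ^{c₂}_u, μ^{c₁}_u] = max{μ^{c₂}_u(c₁), μ^{c₁}_u(c₂)} = max{μ_u(c₁)/(1−μ_u(c₂)), μ_u(c₂)/(1−μ_u(c₁))}. In particular, if p^max_u = max_c μ_u(c) < 1, then d_TV[μ^{c₂}_u, μ^{c₁}_u] ≤ p^max_u/(1−p^max_u).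 -/
/-- Proper `k`-colorings of a graph. -/
def GraphProper {V : Type*} (G : SimpleGraph V) (k : ℕ) (σ : V → Fin k) : Prop :=
  ∀ v w : V, G.Adj v w → σ v ≠ σ w

/-- `σ` is consistent with the boundary condition `b`. -/
def GraphCons {V : Type*} {k : ℕ} (b : V → Option (Fin k)) (σ : V → Fin k) : Prop :=
  ∀ (v : V) (c : Fin k), b v = some c → σ v = c

/-- The marginal at `u` of the uniform distribution over proper colorings of `G`
consistent with `b`. -/
noncomputable def graphMarg {V : Type*} (G : SimpleGraph V) (k : ℕ)
    (b : V → Option (Fin k)) (u : V) (c : Fin k) : ℝ :=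
  (Nat.card {σ : V → Fin k // GraphProper G k σ ∧ GraphCons b σ ∧ σ u = c} : ℝ) /
    (Nat.card {σ : V → Fin k // GraphProper G k σ ∧ GraphCons b σ} : ℝ)

/-- The marginal at `u` after attaching to `u` a new neighbor fixed to color `cban`;
equivalently, the marginal at `u` conditioned on the color at `u` differing from `cban`. -/
noncomputable def graphMargBan {V : Type*} (G : SimpleGraph V) (k : ℕ)
    (b : V → Option (Fin k)) (u : V) (cban c : Fin k) : ℝ :=
  (Nat.card {σ : V → Fin k //
      GraphProper G k σ ∧ GraphCons b σ ∧ σ u ≠ cban ∧ σ u = c} : ℝ) /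
    (Nat.card {σ : V → Fin k // GraphProper G k σ ∧ GraphCons b σ ∧ σ u ≠ cban} : ℝ)


private lemma tvDist_comm {k : ℕ} (p q : Fin k → ℝ) : tvDist p q = tvDist q p := by
  unfold tvDist
  congr 1
  exact Finset.sum_congr rfl fun c _ => abs_sub_comm _ _

private lemma dpb_aux {V : Type*} [Fintype V] (G : SimpleGraph V)
    (k : ℕ) (b : V → Option (Fin k))
    (u : V) (hne : ∃ σ : V → Fin k, GraphProper G k σ ∧ GraphCons b σ)
    (c₁ c₂ : Fin k) (hcc : c₁ ≠ c₂)
    (h₁ : graphMarg G k b u c₁ < 1) (h₂ : graphMarg G k b u c₂ < 1)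
    (hle : graphMarg G k b u c₂ ≤ graphMarg G k b u c₁) :
    tvDist (graphMargBan G k b u c₂) (graphMargBan G k b u c₁) =
        max (graphMargBan G k b u c₂ c₁) (graphMargBan G k b u c₁ c₂) ∧
    tvDist (graphMargBan G k b u c₂) (graphMargBan G k b u c₁) =
        max (graphMarg G k b u c₁ / (1 - graphMarg G k b u c₂))
          (graphMarg G k b u c₂ / (1 - graphMarg G k b u c₁)) ∧
    ((⨆ c : Fin k, graphMarg G k b u c) < 1 →
      tvDist (graphMargBan G k b u c₂) (graphMargBan G k b u c₁) ≤
        (⨆ c : Fin k, graphMarg G k b u c) / (1 - ⨆ c : Fin k, graphMarg G k b u c)) := by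
  classical
  set n : Fin k → ℝ := fun c =>
    (Nat.card {σ : V → Fin k // GraphProper G k σ ∧ GraphCons b σ ∧ σ u = c} : ℝ) with hn
  set N : ℝ := (Nat.card {σ : V → Fin k // GraphProper G k σ ∧ GraphCons b σ} : ℝ) with hN
  have hNpos : 0 < N := by
    obtain ⟨σ, hσ⟩ := hne
    have : Nonempty {σ : V → Fin k // GraphProper G k σ ∧ GraphCons b σ} := ⟨⟨σ, hσ⟩⟩
    rw [hN]; exact_mod_cast Nat.card_pos
  have hmarg : ∀ c, graphMarg G k b u c = n c / N := fun c => rfl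
  have key : Nat.card {σ : V → Fin k // GraphProper G k σ ∧ GraphCons b σ} =
      ∑ c : Fin k, Nat.card {σ : V → Fin k // GraphProper G k σ ∧ GraphCons b σ ∧ σ u = c} := by
    rw [← Nat.card_congr (Equiv.sigmaFiberEquiv
      (fun x : {σ : V → Fin k // GraphProper G k σ ∧ GraphCons b σ} => x.1 u))]
    rw [Nat.card_eq_fintype_card, Fintype.card_sigma]
    refine Finset.sum_congr rfl fun c _ => ?_
    rw [← Nat.card_eq_fintype_card]
    exact Nat.card_congr ((Equiv.subtypeSubtypeEquivSubtypeInter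
      (fun σ : V → Fin k => GraphProper G k σ ∧ GraphCons b σ) (fun σ => σ u = c)).trans
      (Equiv.subtypeEquivRight fun σ => and_assoc))
  have hnsum : ∑ c, n c = N := by
    rw [hN, key]; push_cast; rfl
  have hcard_ne : ∀ cb : Fin k,
      (Nat.card {σ : V → Fin k // GraphProper G k σ ∧ GraphCons b σ ∧ σ u ≠ cb} : ℝ)
        = N - n cb := by
    intro cb
    have e := Nat.card_congr (Equiv.sumCompl
      (fun x : {σ : V → Fin k // GraphProper G k σ ∧ GraphCons b σ} => x.1 u = cb))
    rw [Nat.card_sum] at e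
    have e1 : Nat.card {x : {σ : V → Fin k // GraphProper G k σ ∧ GraphCons b σ} // x.1 u = cb}
        = Nat.card {σ : V → Fin k // GraphProper G k σ ∧ GraphCons b σ ∧ σ u = cb} :=
      Nat.card_congr ((Equiv.subtypeSubtypeEquivSubtypeInter
        (fun σ : V → Fin k => GraphProper G k σ ∧ GraphCons b σ) (fun σ => σ u = cb)).trans
        (Equiv.subtypeEquivRight fun σ => and_assoc))
    have e2 : Nat.card {x : {σ : V → Fin k // GraphProper G k σ ∧ GraphCons b σ} // ¬ x.1 u = cb}
        = Nat.card {σ : V → Fin k // GraphProper G k σ ∧ GraphCons b σ ∧ σ u ≠ cb} :=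
      Nat.card_congr ((Equiv.subtypeSubtypeEquivSubtypeInter
        (fun σ : V → Fin k => GraphProper G k σ ∧ GraphCons b σ) (fun σ => ¬ σ u = cb)).trans
        (Equiv.subtypeEquivRight fun σ => and_assoc))
    rw [e1, e2] at e
    rw [hN, hn]
    have := congrArg (fun x : ℕ => (x : ℝ)) e
    push_cast at this ⊢
    linarith
  have hban : ∀ cb c : Fin k, graphMargBan G k b u cb c =
      (if c = cb then 0 else n c) / (N - n cb) := by
    intro cb c
    rw [graphMargBan, hcard_ne]
    congr 1
    by_cases hc : c = cb
    · subst hc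
      rw [if_pos rfl]
      have : IsEmpty {σ : V → Fin k //
          GraphProper G k σ ∧ GraphCons b σ ∧ σ u ≠ c ∧ σ u = c} :=
        ⟨fun x => x.2.2.2.1 x.2.2.2.2⟩
      simp [Nat.card_of_isEmpty]
    · rw [if_neg hc, hn]
      congr 1
      exact Nat.card_congr (Equiv.subtypeEquivRight fun σ =>
        ⟨fun ⟨a, b', _, d⟩ => ⟨a, b', d⟩,
         fun ⟨a, b', d⟩ => ⟨a, b', fun h => hc (d.symm.trans h), d⟩⟩)
  have hn0 : ∀ c, 0 ≤ n c := fun c => by rw [hn]; exact Nat.cast_nonneg _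
  have hn1N : n c₁ < N := by
    rw [hmarg] at h₁; exact (div_lt_one hNpos).mp h₁
  have hn2N : n c₂ < N := by
    rw [hmarg] at h₂; exact (div_lt_one hNpos).mp h₂
  have hle' : n c₂ ≤ n c₁ := by
    rw [hmarg, hmarg] at hle
    exact (div_le_div_iff_of_pos_right hNpos).mp hle
  have h12N : n c₁ + n c₂ ≤ N := by
    rw [← hnsum]
    have h := Finset.sum_le_sum_of_subset_of_nonneg
      (Finset.subset_univ ({c₁, c₂} : Finset (Fin k))) (fun c _ _ => hn0 c)
    rwa [Finset.sum_pair hcc] at h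
  have hD₁ : 0 < N - n c₁ := by linarith
  have hD₂ : 0 < N - n c₂ := by linarith
  have htv : tvDist (graphMargBan G k b u c₂) (graphMargBan G k b u c₁)
      = n c₁ / (N - n c₂) := by
    rw [tvDist]
    have hpt : ∀ c : Fin k,
        |graphMargBan G k b u c₂ c - graphMargBan G k b u c₁ c| =
        (if c = c₁ then
            n c₁ / (N - n c₂) - n c₁ * (n c₁ - n c₂) / ((N - n c₁) * (N - n c₂)) else 0) +
        ((if c = c₂ then
            n c₂ / (N - n c₁) - n c₂ * (n c₁ - n c₂) / ((N - n c₁) * (N - n c₂)) else 0) +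
        n c * (n c₁ - n c₂) / ((N - n c₁) * (N - n c₂))) := by
      intro c
      rw [hban, hban]
      by_cases e1 : c = c₁
      · rw [e1]
        simp only [if_neg hcc, eq_self_iff_true, if_true, zero_div, sub_zero]
        rw [abs_of_nonneg (div_nonneg (hn0 c₁) hD₂.le)]
        field_simp
        ring
      · by_cases e2 : c = c₂
        · rw [e2]
          simp only [if_neg (Ne.symm hcc), eq_self_iff_true, if_true, zero_div, zero_sub, abs_neg, zero_add]
          rw [abs_of_nonneg (div_nonneg (hn0 c₂) hD₁.le)]
          field_simp
          ring
        · simp only [if_neg e1, if_neg e2, zero_add]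
          have hmono : n c / (N - n c₂) ≤ n c / (N - n c₁) := by
            rw [div_le_div_iff₀ hD₂ hD₁]
            nlinarith [hn0 c]
          rw [abs_of_nonpos (by linarith)]
          field_simp
          ring
    rw [Finset.sum_congr rfl fun c _ => hpt c, Finset.sum_add_distrib,
      Finset.sum_add_distrib]
    simp only [Finset.sum_ite_eq', Finset.mem_univ, if_true]
    rw [← Finset.sum_div, ← Finset.sum_mul, hnsum]
    field_simp
    ring
  have hq : n c₂ / (N - n c₁) ≤ n c₁ / (N - n c₂) := by
    rw [div_le_div_iff₀ hD₁ hD₂]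
    nlinarith [hn0 c₁, hn0 c₂]
  have hp2 : 0 < 1 - n c₂ / N := by
    rw [hmarg] at h₂; linarith
  have hp1 : 0 < 1 - n c₁ / N := by
    rw [hmarg] at h₁; linarith
  have e₂ : graphMarg G k b u c₁ / (1 - graphMarg G k b u c₂) = n c₁ / (N - n c₂) := by
    rw [hmarg, hmarg, div_eq_div_iff hp2.ne' hD₂.ne']
    field_simp
  have e₁ : graphMarg G k b u c₂ / (1 - graphMarg G k b u c₁) = n c₂ / (N - n c₁) := by
    rw [hmarg, hmarg, div_eq_div_iff hp1.ne' hD₁.ne']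
    field_simp
  refine ⟨?_, ?_, ?_⟩
  · rw [htv, hban, hban, if_neg hcc, if_neg (Ne.symm hcc)]
    exact (max_eq_left hq).symm
  · rw [htv, e₂, e₁]
    exact (max_eq_left hq).symm
  · intro hM
    have hbdd : ∀ c, graphMarg G k b u c ≤ ⨆ c, graphMarg G k b u c := fun c =>
      le_ciSup (Set.Finite.bddAbove (Set.finite_range _)) c
    have hM0 : 0 ≤ ⨆ c, graphMarg G k b u c := by
      refine le_trans ?_ (hbdd c₁)
      rw [hmarg]
      positivity
    rw [htv, ← e₂]
    exact div_le_div₀ hM0 (hbdd c₁) (by linarith) (by linarith [hbdd c₂])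

/-- Proposition 16 of the paper, from Martinelli-Sinclair-Weitz:
the effect of a disagreeing extra neighbor at `u` on the marginal at `u`. -/
theorem disagreement_percolation_bound {V : Type*} [Fintype V] (G : SimpleGraph V)
    (k : ℕ) (hk : 2 ≤ k) (b : V → Option (Fin k)) (u : V) (hu : b u = none)
    (hne : ∃ σ : V → Fin k, GraphProper G k σ ∧ GraphCons b σ)
    (c₁ c₂ : Fin k) (hcc : c₁ ≠ c₂)
    (h₁ : graphMarg G k b u c₁ < 1) (h₂ : graphMarg G k b u c₂ < 1) :
    tvDist (graphMargBan G k b u c₂) (graphMargBan G k b u c₁) =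
        max (graphMargBan G k b u c₂ c₁) (graphMargBan G k b u c₁ c₂) ∧
    tvDist (graphMargBan G k b u c₂) (graphMargBan G k b u c₁) =
        max (graphMarg G k b u c₁ / (1 - graphMarg G k b u c₂))
          (graphMarg G k b u c₂ / (1 - graphMarg G k b u c₁)) ∧
    ((⨆ c : Fin k, graphMarg G k b u c) < 1 →
      tvDist (graphMargBan G k b u c₂) (graphMargBan G k b u c₁) ≤
        (⨆ c : Fin k, graphMarg G k b u c) / (1 - ⨆ c : Fin k, graphMarg G k b u c)) := by
  rcases le_total (graphMarg G k b u c₂) (graphMarg G k b u c₁) with h | h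
  · exact dpb_aux G k b u hne c₁ c₂ hcc h₁ h₂ h
  · obtain ⟨e1, e2, e3⟩ := dpb_aux G k b u hne c₂ c₁ hcc.symm h₂ h₁ h
    refine ⟨?_, ?_, fun hM => ?_⟩
    · rw [tvDist_comm, e1, max_comm]
    · rw [tvDist_comm, e2, max_comm]
    · rw [tvDist_comm]
      exact e3 hM
end

section
/- Fix ℓ, δ > 0 and A ≥ 0. Suppose that for every pair of colors c₁, c₂ ∈ [k] there exists a coupling ν of μ^↓_{c₁,ℓ} and μ^↓_{c₂,ℓ} such that the probability over (X,Y) drawn from ν that d_TV[μ^↑_{X,ℓ}, μ^↑_{Y,ℓ}] > δ³ is at most A. Then for every color c ∈ [k], the probability over X drawn from the leaf-marginal of μ_ℓ that |μ^↑_{X,ℓ}(c) − 1/k| > 2δ is at most 2(e^{−1/δ} + A/δ). -/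
open Finset

namespace MSWaux

open scoped Classical

variable {Δ ℓ k : ℕ}

noncomputable def nn (Δ ℓ k : ℕ) (X : (Fin ℓ → Fin Δ) → Fin k) : ℕ :=
  Nat.card {σ : TVertex Δ ℓ → Fin k // ProperColoring Δ ℓ k σ ∧ leafColoring σ = X}

noncomputable def nc (Δ ℓ k : ℕ) (X : (Fin ℓ → Fin Δ) → Fin k) (c : Fin k) : ℕ :=
  Nat.card {σ : TVertex Δ ℓ → Fin k //
    ProperColoring Δ ℓ k σ ∧ leafColoring σ = X ∧ σ (troot Δ ℓ) = c}

noncomputable def NN (Δ ℓ k : ℕ) : ℕ :=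
  Nat.card {σ : TVertex Δ ℓ → Fin k // ProperColoring Δ ℓ k σ}

noncomputable def Nr (Δ ℓ k : ℕ) (c : Fin k) : ℕ :=
  Nat.card {σ : TVertex Δ ℓ → Fin k // ProperColoring Δ ℓ k σ ∧ σ (troot Δ ℓ) = c}

lemma card_filter (p : (TVertex Δ ℓ → Fin k) → Prop) :
    Nat.card {σ : TVertex Δ ℓ → Fin k // p σ} = (Finset.univ.filter p).card := by
  rw [Nat.card_eq_fintype_card, Fintype.card_subtype]

lemma filter_card_congr {α : Type*} [Fintype α] {p q : α → Prop}
    {ip : DecidablePred p} {iq : DecidablePred q} (h : ∀ a, p a ↔ q a) :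
    (@Finset.filter α p ip Finset.univ).card = (@Finset.filter α q iq Finset.univ).card := by
  have he : @Finset.filter α p ip Finset.univ = @Finset.filter α q iq Finset.univ := by
    ext a
    simp only [mem_filter, mem_univ, true_and]
    exact h a
  rw [he]

lemma filter_card_zero {α : Type*} [Fintype α] {p : α → Prop}
    {ip : DecidablePred p} (h : ∀ a, ¬ p a) :
    (@Finset.filter α p ip Finset.univ).card = 0 := by
  refine Finset.card_eq_zero.2 (Finset.eq_empty_iff_forall_notMem.2 (fun σ hσ => ?_))
  exact h σ (Finset.mem_filter.1 hσ).2

lemma fiber_sum {β : Type*} [Fintype β] (p : (TVertex Δ ℓ → Fin k) → Prop)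
    (f : (TVertex Δ ℓ → Fin k) → β) :
    (Finset.univ.filter p).card
      = ∑ b : β, (Finset.univ.filter (fun σ => p σ ∧ f σ = b)).card := by
  rw [Finset.card_eq_sum_card_fiberwise (f := f) (t := Finset.univ) (fun x _ => mem_univ _)]
  apply Finset.sum_congr rfl
  intro b _
  congr 1
  ext a
  simp only [mem_filter, mem_univ, true_and]

lemma agrees_iff (σ : TVertex Δ ℓ → Fin k) (X : (Fin ℓ → Fin Δ) → Fin k) :
    AgreesOn σ (toPartial X) ↔ leafColoring σ = X := by
  constructor
  · intro h; funext f; exact h f (X f) rfl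
  · rintro rfl f c hc; exact Option.some_inj.mp hc

lemma upDist_eq (X : (Fin ℓ → Fin Δ) → Fin k) (c : Fin k) :
    upDist Δ ℓ k X c = (nc Δ ℓ k X c : ℝ) / (nn Δ ℓ k X : ℝ) := by
  have h1 : Nat.card {σ : TVertex Δ ℓ → Fin k //
      ProperColoring Δ ℓ k σ ∧ AgreesOn σ (toPartial X) ∧ σ (troot Δ ℓ) = c}
      = nc Δ ℓ k X c :=
    Nat.card_congr (Equiv.subtypeEquivRight (fun σ => by rw [agrees_iff]))
  have h2 : Nat.card {σ : TVertex Δ ℓ → Fin k //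
      ProperColoring Δ ℓ k σ ∧ AgreesOn σ (toPartial X)} = nn Δ ℓ k X :=
    Nat.card_congr (Equiv.subtypeEquivRight (fun σ => by rw [agrees_iff]))
  unfold upDist condProbRootP
  rw [h1, h2]

lemma downDist_eq (c : Fin k) (X : (Fin ℓ → Fin Δ) → Fin k) :
    downDist Δ ℓ k c X = (nc Δ ℓ k X c : ℝ) / (Nr Δ ℓ k c : ℝ) := by
  have h1 : Nat.card {σ : TVertex Δ ℓ → Fin k //
      ProperColoring Δ ℓ k σ ∧ σ (troot Δ ℓ) = c ∧ leafColoring σ = X}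
      = nc Δ ℓ k X c :=
    Nat.card_congr (Equiv.subtypeEquivRight (fun σ => by tauto))
  unfold downDist Nr
  rw [h1]

lemma sum_nc (X : (Fin ℓ → Fin Δ) → Fin k) :
    ∑ c : Fin k, nc Δ ℓ k X c = nn Δ ℓ k X := by
  unfold nc nn
  simp only [card_filter]
  rw [fiber_sum (fun σ => ProperColoring Δ ℓ k σ ∧ leafColoring σ = X) (fun σ => σ (troot Δ ℓ))]
  apply Finset.sum_congr rfl
  intro cc _
  exact filter_card_congr (fun σ => by tauto)

lemma sum_nn : ∑ X : (Fin ℓ → Fin Δ) → Fin k, nn Δ ℓ k X = NN Δ ℓ k := by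
  unfold nn NN
  simp only [card_filter]
  rw [fiber_sum (ProperColoring Δ ℓ k) (leafColoring)]
  exact Finset.sum_congr rfl (fun X _ => filter_card_congr (fun σ => Iff.rfl))

lemma sum_nc_X (c : Fin k) :
    ∑ X : (Fin ℓ → Fin Δ) → Fin k, nc Δ ℓ k X c = Nr Δ ℓ k c := by
  unfold nc Nr
  simp only [card_filter]
  rw [fiber_sum (fun σ => ProperColoring Δ ℓ k σ ∧ σ (troot Δ ℓ) = c) (leafColoring)]
  apply Finset.sum_congr rfl
  intro X _
  exact filter_card_congr (fun σ => by tauto)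

lemma proper_perm (π : Equiv.Perm (Fin k)) (σ : TVertex Δ ℓ → Fin k) :
    ProperColoring Δ ℓ k (π ∘ σ) ↔ ProperColoring Δ ℓ k σ := by
  unfold ProperColoring
  constructor
  · intro h v hv j hne
    exact h v hv j (by simp only [Function.comp_apply, hne])
  · intro h v hv j
    exact fun hc => h v hv j (π.injective hc)

lemma Nr_indep (c c' : Fin k) : Nr Δ ℓ k c = Nr Δ ℓ k c' := by
  unfold Nr
  apply Nat.card_congr
  refine Equiv.subtypeEquiv (Equiv.arrowCongr (Equiv.refl _) (Equiv.swap c c')) (fun σ => ?_)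
  have harr : ((Equiv.refl (TVertex Δ ℓ)).arrowCongr (Equiv.swap c c')) σ
      = (Equiv.swap c c') ∘ σ := by
    funext v
    simp [Equiv.arrowCongr]
  rw [harr]
  constructor
  · rintro ⟨h1, h2⟩
    refine ⟨(proper_perm (Equiv.swap c c') σ).2 h1, ?_⟩
    simp only [Function.comp_apply, h2, Equiv.swap_apply_left]
  · rintro ⟨h1, h2⟩
    refine ⟨(proper_perm (Equiv.swap c c') σ).1 h1, ?_⟩
    simp only [Function.comp_apply] at h2
    exact (Equiv.swap c c').injective (h2.trans (Equiv.swap_apply_left c c').symm)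

lemma k_mul_Nr (c : Fin k) : k * Nr Δ ℓ k c = NN Δ ℓ k := by
  have h : ∑ c' : Fin k, Nr Δ ℓ k c' = NN Δ ℓ k := by
    unfold Nr NN
    simp only [card_filter]
    rw [fiber_sum (ProperColoring Δ ℓ k) (fun σ => σ (troot Δ ℓ))]
    exact Finset.sum_congr rfl (fun cc _ => filter_card_congr (fun σ => Iff.rfl))
  rw [← h, Finset.sum_congr rfl (fun c' _ => Nr_indep c' c)]
  simp [mul_comm]

lemma nc_le_nn (X : (Fin ℓ → Fin Δ) → Fin k) (c : Fin k) : nc Δ ℓ k X c ≤ nn Δ ℓ k X := by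
  unfold nc nn
  simp only [card_filter]
  apply Finset.card_le_card
  intro σ hσ
  simp only [mem_filter, mem_univ, true_and] at *
  tauto

lemma nc_le_Nr (X : (Fin ℓ → Fin Δ) → Fin k) (c : Fin k) : nc Δ ℓ k X c ≤ Nr Δ ℓ k c := by
  unfold nc Nr
  simp only [card_filter]
  apply Finset.card_le_card
  intro σ hσ
  simp only [mem_filter, mem_univ, true_and] at *
  tauto

lemma downDist_eq' (hk : 0 < k) (c : Fin k) (X : (Fin ℓ → Fin Δ) → Fin k) :
    downDist Δ ℓ k c X = k * (nc Δ ℓ k X c : ℝ) / (NN Δ ℓ k : ℝ) := by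
  rw [downDist_eq, ← k_mul_Nr (Δ := Δ) (ℓ := ℓ) c]
  rcases Nat.eq_zero_or_pos (Nr Δ ℓ k c) with h | h
  · have h0 : nc Δ ℓ k X c = 0 := Nat.le_zero.1 (h ▸ nc_le_Nr X c)
    simp [h0, h]
  · have hkpos : (0:ℝ) < (k : ℝ) := by exact_mod_cast hk
    have hNr : (0:ℝ) < (Nr Δ ℓ k c : ℝ) := by exact_mod_cast h
    rw [Nat.cast_mul]
    rw [div_eq_div_iff hNr.ne' (by positivity : (0:ℝ) < (k:ℝ) * (Nr Δ ℓ k c : ℝ)).ne']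
    ring

lemma treeProb_leaf (E : ((Fin ℓ → Fin Δ) → Fin k) → Prop) :
    treeProb Δ ℓ k (fun σ => E (leafColoring σ))
      = (∑ X : (Fin ℓ → Fin Δ) → Fin k, if E X then (nn Δ ℓ k X : ℝ) else 0) / (NN Δ ℓ k : ℝ) := by
  unfold treeProb
  have hnum : Nat.card {σ : TVertex Δ ℓ → Fin k //
      ProperColoring Δ ℓ k σ ∧ E (leafColoring σ)}
      = ∑ X : (Fin ℓ → Fin Δ) → Fin k, if E X then nn Δ ℓ k X else 0 := by
    rw [card_filter (fun σ => ProperColoring Δ ℓ k σ ∧ E (leafColoring σ)),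
      fiber_sum (fun σ => ProperColoring Δ ℓ k σ ∧ E (leafColoring σ)) (leafColoring)]
    apply Finset.sum_congr rfl
    intro X _
    by_cases hE : E X
    · rw [if_pos hE]
      unfold nn
      rw [card_filter]
      refine filter_card_congr (fun σ => ?_)
      constructor
      · rintro ⟨⟨h1, _⟩, h3⟩; exact ⟨h1, h3⟩
      · rintro ⟨h1, h3⟩; exact ⟨⟨h1, by rw [h3]; exact hE⟩, h3⟩
    · rw [if_neg hE]
      refine filter_card_zero (fun σ => ?_)
      rintro ⟨⟨-, h2⟩, h3⟩
      exact hE (h3 ▸ h2)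
  rw [hnum]
  have : ((∑ X : (Fin ℓ → Fin Δ) → Fin k, if E X then nn Δ ℓ k X else 0 : ℕ) : ℝ)
      = ∑ X : (Fin ℓ → Fin Δ) → Fin k, if E X then (nn Δ ℓ k X : ℝ) else 0 := by
    rw [Nat.cast_sum]
    apply Finset.sum_congr rfl
    intro X _
    split <;> simp
  rw [this]
  rfl

end MSWaux

namespace MSWaux

open scoped Classical

variable {Δ ℓ k : ℕ}

lemma div_mono_num {a b N : ℝ} (hN : 0 ≤ N) (h : a ≤ b) : a/N ≤ b/N := by
  rw [div_eq_mul_inv, div_eq_mul_inv]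
  exact mul_le_mul_of_nonneg_right h (inv_nonneg.2 hN)

lemma upDist_nonneg (X : (Fin ℓ → Fin Δ) → Fin k) (c : Fin k) : 0 ≤ upDist Δ ℓ k X c := by
  rw [upDist_eq]; positivity

lemma upDist_le_one (X : (Fin ℓ → Fin Δ) → Fin k) (c : Fin k) : upDist Δ ℓ k X c ≤ 1 := by
  rw [upDist_eq]
  rcases Nat.eq_zero_or_pos (nn Δ ℓ k X) with h | h
  · have h0 : nc Δ ℓ k X c = 0 := Nat.le_zero.1 (h ▸ nc_le_nn X c)
    simp [h0, h]
  · rw [div_le_one (by exact_mod_cast h)]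
    exact_mod_cast nc_le_nn X c

noncomputable def Uprob (Δ ℓ k : ℕ) (c : Fin k) (s : ℝ) : ℝ :=
  (∑ X : (Fin ℓ → Fin Δ) → Fin k, if s < upDist Δ ℓ k X c then (nn Δ ℓ k X : ℝ) else 0)
    / (NN Δ ℓ k : ℝ)

noncomputable def Lprob (Δ ℓ k : ℕ) (c : Fin k) (t : ℝ) : ℝ :=
  (∑ X : (Fin ℓ → Fin Δ) → Fin k, if upDist Δ ℓ k X c < t then (nn Δ ℓ k X : ℝ) else 0)
    / (NN Δ ℓ k : ℝ)

noncomputable def Dsum (Δ ℓ k : ℕ) (c' c : Fin k) (s : ℝ) : ℝ :=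
  ∑ X : (Fin ℓ → Fin Δ) → Fin k, if s < upDist Δ ℓ k X c then downDist Δ ℓ k c' X else 0

noncomputable def Msum (Δ ℓ k : ℕ) (c' c : Fin k) (t : ℝ) : ℝ :=
  ∑ X : (Fin ℓ → Fin Δ) → Fin k, if upDist Δ ℓ k X c < t then downDist Δ ℓ k c' X else 0

lemma Uprob_nonneg (c : Fin k) (s : ℝ) : 0 ≤ Uprob Δ ℓ k c s := by
  unfold Uprob
  apply div_nonneg _ (by positivity)
  apply Finset.sum_nonneg
  intro X _
  split <;> positivity

lemma Lprob_nonneg (c : Fin k) (t : ℝ) : 0 ≤ Lprob Δ ℓ k c t := by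
  unfold Lprob
  apply div_nonneg _ (by positivity)
  apply Finset.sum_nonneg
  intro X _
  split <;> positivity

lemma sum_ite_le_NN (p : ((Fin ℓ → Fin Δ) → Fin k) → Prop) :
    (∑ X : (Fin ℓ → Fin Δ) → Fin k, if p X then (nn Δ ℓ k X : ℝ) else 0) ≤ (NN Δ ℓ k : ℝ) := by
  have h : (∑ X : (Fin ℓ → Fin Δ) → Fin k, if p X then (nn Δ ℓ k X : ℝ) else 0)
      ≤ ∑ X : (Fin ℓ → Fin Δ) → Fin k, (nn Δ ℓ k X : ℝ) := by
    apply Finset.sum_le_sum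
    intro X _
    split
    · exact le_refl _
    · positivity
  calc _ ≤ ∑ X : (Fin ℓ → Fin Δ) → Fin k, (nn Δ ℓ k X : ℝ) := h
    _ = (NN Δ ℓ k : ℝ) := by rw [← Nat.cast_sum, sum_nn]

lemma div_NN_le_one {a : ℝ} (h0 : 0 ≤ a) (h : a ≤ (NN Δ ℓ k : ℝ)) : a / (NN Δ ℓ k : ℝ) ≤ 1 := by
  rcases Nat.eq_zero_or_pos (NN Δ ℓ k) with hN | hN
  · rw [hN]
    simp only [Nat.cast_zero, div_zero]
    norm_num
  · rw [div_le_one (by exact_mod_cast hN)]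
    exact h

lemma Uprob_le_one (c : Fin k) (s : ℝ) : Uprob Δ ℓ k c s ≤ 1 := by
  unfold Uprob
  apply div_NN_le_one _ (sum_ite_le_NN _)
  apply Finset.sum_nonneg; intro X _; split <;> positivity

lemma Lprob_le_one (c : Fin k) (t : ℝ) : Lprob Δ ℓ k c t ≤ 1 := by
  unfold Lprob
  apply div_NN_le_one _ (sum_ite_le_NN _)
  apply Finset.sum_nonneg; intro X _; split <;> positivity

lemma Dsum_eq (hk : 0 < k) (c' c : Fin k) (s : ℝ) :
    Dsum Δ ℓ k c' c s
      = (∑ X : (Fin ℓ → Fin Δ) → Fin k,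
          if s < upDist Δ ℓ k X c then (k : ℝ) * (nc Δ ℓ k X c' : ℝ) else 0) / (NN Δ ℓ k : ℝ) := by
  unfold Dsum
  rw [Finset.sum_div]
  apply Finset.sum_congr rfl
  intro X _
  split
  · exact downDist_eq' hk c' X
  · rw [zero_div]

lemma Msum_eq (hk : 0 < k) (c' c : Fin k) (t : ℝ) :
    Msum Δ ℓ k c' c t
      = (∑ X : (Fin ℓ → Fin Δ) → Fin k,
          if upDist Δ ℓ k X c < t then (k : ℝ) * (nc Δ ℓ k X c' : ℝ) else 0) / (NN Δ ℓ k : ℝ) := by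
  unfold Msum
  rw [Finset.sum_div]
  apply Finset.sum_congr rfl
  intro X _
  split
  · exact downDist_eq' hk c' X
  · rw [zero_div]

/-- (u1) -/
lemma u1 (hk : 0 < k) (c : Fin k) (s : ℝ) :
    (k : ℝ) * s * Uprob Δ ℓ k c s ≤ Dsum Δ ℓ k c c s := by
  rw [Dsum_eq hk]
  unfold Uprob
  rw [← mul_div_assoc, Finset.mul_sum]
  apply div_mono_num (by positivity)
  apply Finset.sum_le_sum
  intro X _
  rw [mul_ite, mul_zero]
  split
  · rename_i hX
    rcases Nat.eq_zero_or_pos (nn Δ ℓ k X) with h | h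
    · have h0 : nc Δ ℓ k X c = 0 := Nat.le_zero.1 (h ▸ nc_le_nn X c)
      simp [h0, h]
    · have hnn : (0:ℝ) < (nn Δ ℓ k X : ℝ) := by exact_mod_cast h
      have hup : upDist Δ ℓ k X c = (nc Δ ℓ k X c : ℝ) / (nn Δ ℓ k X : ℝ) := upDist_eq X c
      have hs : s * (nn Δ ℓ k X : ℝ) ≤ (nc Δ ℓ k X c : ℝ) := by
        rw [hup, lt_div_iff₀ hnn] at hX
        linarith
      have hkr : (0:ℝ) ≤ (k:ℝ) := by positivity
      calc (k : ℝ) * s * (nn Δ ℓ k X : ℝ) = (k:ℝ) * (s * (nn Δ ℓ k X : ℝ)) := by ring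
        _ ≤ (k:ℝ) * (nc Δ ℓ k X c : ℝ) := by
            exact mul_le_mul_of_nonneg_left hs hkr
  · exact le_refl 0

/-- (l1) -/
lemma l1 (hk : 0 < k) (c : Fin k) (t : ℝ) :
    Msum Δ ℓ k c c t ≤ (k : ℝ) * t * Lprob Δ ℓ k c t := by
  rw [Msum_eq hk]
  unfold Lprob
  rw [← mul_div_assoc, Finset.mul_sum]
  apply div_mono_num (by positivity)
  apply Finset.sum_le_sum
  intro X _
  rw [mul_ite, mul_zero]
  split
  · rename_i hX
    rcases Nat.eq_zero_or_pos (nn Δ ℓ k X) with h | h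
    · have h0 : nc Δ ℓ k X c = 0 := Nat.le_zero.1 (h ▸ nc_le_nn X c)
      simp [h0, h]
    · have hnn : (0:ℝ) < (nn Δ ℓ k X : ℝ) := by exact_mod_cast h
      have hup : upDist Δ ℓ k X c = (nc Δ ℓ k X c : ℝ) / (nn Δ ℓ k X : ℝ) := upDist_eq X c
      have hs : (nc Δ ℓ k X c : ℝ) ≤ t * (nn Δ ℓ k X : ℝ) := by
        rw [hup, div_lt_iff₀ hnn] at hX
        linarith
      have hkr : (0:ℝ) ≤ (k:ℝ) := by positivity
      calc (k : ℝ) * (nc Δ ℓ k X c : ℝ) ≤ (k:ℝ) * (t * (nn Δ ℓ k X : ℝ)) :=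
            mul_le_mul_of_nonneg_left hs hkr
        _ = (k:ℝ) * t * (nn Δ ℓ k X : ℝ) := by ring
  · exact le_refl 0

/-- (u3) -/
lemma u3 (hk : 0 < k) (c : Fin k) (s : ℝ) :
    ∑ c' : Fin k, Dsum Δ ℓ k c' c s = (k : ℝ) * Uprob Δ ℓ k c s := by
  have : ∑ c' : Fin k, Dsum Δ ℓ k c' c s
      = ∑ c' : Fin k, (∑ X : (Fin ℓ → Fin Δ) → Fin k,
          if s < upDist Δ ℓ k X c then (k : ℝ) * (nc Δ ℓ k X c' : ℝ) else 0) / (NN Δ ℓ k : ℝ) :=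
    Finset.sum_congr rfl (fun c' _ => Dsum_eq hk c' c s)
  rw [this, ← Finset.sum_div]
  unfold Uprob
  rw [← mul_div_assoc]
  congr 1
  rw [Finset.sum_comm, Finset.mul_sum]
  apply Finset.sum_congr rfl
  intro X _
  rw [mul_ite, mul_zero]
  split
  · rw [← Finset.mul_sum, ← Nat.cast_sum, sum_nc]
  · simp

/-- (l3) -/
lemma l3 (hk : 0 < k) (c : Fin k) (t : ℝ) :
    ∑ c' : Fin k, Msum Δ ℓ k c' c t = (k : ℝ) * Lprob Δ ℓ k c t := by
  have : ∑ c' : Fin k, Msum Δ ℓ k c' c t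
      = ∑ c' : Fin k, (∑ X : (Fin ℓ → Fin Δ) → Fin k,
          if upDist Δ ℓ k X c < t then (k : ℝ) * (nc Δ ℓ k X c' : ℝ) else 0) / (NN Δ ℓ k : ℝ) :=
    Finset.sum_congr rfl (fun c' _ => Msum_eq hk c' c t)
  rw [this, ← Finset.sum_div]
  unfold Lprob
  rw [← mul_div_assoc]
  congr 1
  rw [Finset.sum_comm, Finset.mul_sum]
  apply Finset.sum_congr rfl
  intro X _
  rw [mul_ite, mul_zero]
  split
  · rw [← Finset.mul_sum, ← Nat.cast_sum, sum_nc]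
  · simp

lemma up_diff_le (X Y : (Fin ℓ → Fin Δ) → Fin k) (c : Fin k) :
    |upDist Δ ℓ k X c - upDist Δ ℓ k Y c| ≤ 2 * tvDist (upDist Δ ℓ k X) (upDist Δ ℓ k Y) := by
  unfold tvDist
  have h : |upDist Δ ℓ k X c - upDist Δ ℓ k Y c|
      ≤ ∑ d : Fin k, |upDist Δ ℓ k X d - upDist Δ ℓ k Y d| := by
    apply Finset.single_le_sum (f := fun d => |upDist Δ ℓ k X d - upDist Δ ℓ k Y d|)
    · intro d _; positivity
    · exact Finset.mem_univ c
  linarith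

/-- (u2) -/
lemma u2 {δ A : ℝ} (c' c'' c : Fin k) (s : ℝ)
    (ν : (((Fin ℓ → Fin Δ) → Fin k) × ((Fin ℓ → Fin Δ) → Fin k)) → ℝ)
    (hν : IsCoupling ν (downDist Δ ℓ k c') (downDist Δ ℓ k c''))
    (hb : (∑ q : ((Fin ℓ → Fin Δ) → Fin k) × ((Fin ℓ → Fin Δ) → Fin k),
        Set.indicator {q : ((Fin ℓ → Fin Δ) → Fin k) × ((Fin ℓ → Fin Δ) → Fin k) |
            δ ^ 3 < tvDist (upDist Δ ℓ k q.1) (upDist Δ ℓ k q.2)} ν q) ≤ A) :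
    Dsum Δ ℓ k c' c s ≤ A + Dsum Δ ℓ k c'' c (s - 2*δ^3) := by
  obtain ⟨hν0, hν1, hν2⟩ := hν
  have hD1 : Dsum Δ ℓ k c' c s
      = ∑ X : (Fin ℓ → Fin Δ) → Fin k, ∑ Y : (Fin ℓ → Fin Δ) → Fin k,
          (if s < upDist Δ ℓ k X c then ν (X, Y) else 0) := by
    unfold Dsum
    apply Finset.sum_congr rfl
    intro X _
    split
    · exact (hν1 X).symm
    · simp
  have key : ∀ X Y : (Fin ℓ → Fin Δ) → Fin k,
      (if s < upDist Δ ℓ k X c then ν (X, Y) else 0)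
      ≤ Set.indicator {q : ((Fin ℓ → Fin Δ) → Fin k) × ((Fin ℓ → Fin Δ) → Fin k) |
            δ ^ 3 < tvDist (upDist Δ ℓ k q.1) (upDist Δ ℓ k q.2)} ν (X, Y)
        + (if s - 2*δ^3 < upDist Δ ℓ k Y c then ν (X, Y) else 0) := by
    intro X Y
    rw [Set.indicator_apply]
    by_cases hbad : (X, Y) ∈ {q : ((Fin ℓ → Fin Δ) → Fin k) × ((Fin ℓ → Fin Δ) → Fin k) |
            δ ^ 3 < tvDist (upDist Δ ℓ k q.1) (upDist Δ ℓ k q.2)}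
    · rw [if_pos hbad]
      have h2 : (0:ℝ) ≤ (if s - 2*δ^3 < upDist Δ ℓ k Y c then ν (X, Y) else 0) := by
        split
        · exact hν0 _
        · exact le_refl 0
      have h1 : (if s < upDist Δ ℓ k X c then ν (X, Y) else 0) ≤ ν (X, Y) := by
        split
        · exact le_refl _
        · exact hν0 _
      linarith
    · rw [if_neg hbad]
      simp only [Set.mem_setOf_eq, not_lt] at hbad
      split
      · rename_i hX
        have hd := up_diff_le X Y c
        have : s - 2*δ^3 < upDist Δ ℓ k Y c := by
          have habs := abs_le.1 hd
          linarith [habs.1, habs.2]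
        rw [if_pos this]
        simp
      · split
        · rename_i h1 h2
          simpa using hν0 (X, Y)
        · simp
  calc Dsum Δ ℓ k c' c s
      ≤ ∑ X : (Fin ℓ → Fin Δ) → Fin k, ∑ Y : (Fin ℓ → Fin Δ) → Fin k,
          (Set.indicator {q : ((Fin ℓ → Fin Δ) → Fin k) × ((Fin ℓ → Fin Δ) → Fin k) |
            δ ^ 3 < tvDist (upDist Δ ℓ k q.1) (upDist Δ ℓ k q.2)} ν (X, Y)
          + (if s - 2*δ^3 < upDist Δ ℓ k Y c then ν (X, Y) else 0)) := by
        rw [hD1]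
        apply Finset.sum_le_sum
        intro X _
        exact Finset.sum_le_sum (fun Y _ => key X Y)
    _ = (∑ q : ((Fin ℓ → Fin Δ) → Fin k) × ((Fin ℓ → Fin Δ) → Fin k),
          Set.indicator {q : ((Fin ℓ → Fin Δ) → Fin k) × ((Fin ℓ → Fin Δ) → Fin k) |
            δ ^ 3 < tvDist (upDist Δ ℓ k q.1) (upDist Δ ℓ k q.2)} ν q)
        + ∑ X : (Fin ℓ → Fin Δ) → Fin k, ∑ Y : (Fin ℓ → Fin Δ) → Fin k,
            (if s - 2*δ^3 < upDist Δ ℓ k Y c then ν (X, Y) else 0) := by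
        rw [show (∑ X : (Fin ℓ → Fin Δ) → Fin k, ∑ Y : (Fin ℓ → Fin Δ) → Fin k,
          (Set.indicator {q : ((Fin ℓ → Fin Δ) → Fin k) × ((Fin ℓ → Fin Δ) → Fin k) |
            δ ^ 3 < tvDist (upDist Δ ℓ k q.1) (upDist Δ ℓ k q.2)} ν (X, Y)
          + (if s - 2*δ^3 < upDist Δ ℓ k Y c then ν (X, Y) else 0)))
          = (∑ X : (Fin ℓ → Fin Δ) → Fin k, ∑ Y : (Fin ℓ → Fin Δ) → Fin k,
            Set.indicator {q : ((Fin ℓ → Fin Δ) → Fin k) × ((Fin ℓ → Fin Δ) → Fin k) |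
            δ ^ 3 < tvDist (upDist Δ ℓ k q.1) (upDist Δ ℓ k q.2)} ν (X, Y))
          + ∑ X : (Fin ℓ → Fin Δ) → Fin k, ∑ Y : (Fin ℓ → Fin Δ) → Fin k,
            (if s - 2*δ^3 < upDist Δ ℓ k Y c then ν (X, Y) else 0) from by
          rw [← Finset.sum_add_distrib]
          apply Finset.sum_congr rfl
          intro X _
          rw [← Finset.sum_add_distrib]]
        congr 1
        exact (Fintype.sum_prod_type _).symm
    _ ≤ A + Dsum Δ ℓ k c'' c (s - 2*δ^3) := by
        apply add_le_add hb
        rw [Finset.sum_comm]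
        unfold Dsum
        apply le_of_eq
        apply Finset.sum_congr rfl
        intro Y _
        split
        · exact hν2 Y
        · simp

/-- (l2) -/
lemma l2 {δ A : ℝ} (c' c'' c : Fin k) (s : ℝ)
    (ν : (((Fin ℓ → Fin Δ) → Fin k) × ((Fin ℓ → Fin Δ) → Fin k)) → ℝ)
    (hν : IsCoupling ν (downDist Δ ℓ k c') (downDist Δ ℓ k c''))
    (hb : (∑ q : ((Fin ℓ → Fin Δ) → Fin k) × ((Fin ℓ → Fin Δ) → Fin k),
        Set.indicator {q : ((Fin ℓ → Fin Δ) → Fin k) × ((Fin ℓ → Fin Δ) → Fin k) |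
            δ ^ 3 < tvDist (upDist Δ ℓ k q.1) (upDist Δ ℓ k q.2)} ν q) ≤ A) :
    Msum Δ ℓ k c' c s ≤ A + Msum Δ ℓ k c'' c (s + 2*δ^3) := by
  obtain ⟨hν0, hν1, hν2⟩ := hν
  have hD1 : Msum Δ ℓ k c' c s
      = ∑ X : (Fin ℓ → Fin Δ) → Fin k, ∑ Y : (Fin ℓ → Fin Δ) → Fin k,
          (if upDist Δ ℓ k X c < s then ν (X, Y) else 0) := by
    unfold Msum
    apply Finset.sum_congr rfl
    intro X _
    split
    · exact (hν1 X).symm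
    · simp
  have key : ∀ X Y : (Fin ℓ → Fin Δ) → Fin k,
      (if upDist Δ ℓ k X c < s then ν (X, Y) else 0)
      ≤ Set.indicator {q : ((Fin ℓ → Fin Δ) → Fin k) × ((Fin ℓ → Fin Δ) → Fin k) |
            δ ^ 3 < tvDist (upDist Δ ℓ k q.1) (upDist Δ ℓ k q.2)} ν (X, Y)
        + (if upDist Δ ℓ k Y c < s + 2*δ^3 then ν (X, Y) else 0) := by
    intro X Y
    rw [Set.indicator_apply]
    by_cases hbad : (X, Y) ∈ {q : ((Fin ℓ → Fin Δ) → Fin k) × ((Fin ℓ → Fin Δ) → Fin k) |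
            δ ^ 3 < tvDist (upDist Δ ℓ k q.1) (upDist Δ ℓ k q.2)}
    · rw [if_pos hbad]
      have h2 : (0:ℝ) ≤ (if upDist Δ ℓ k Y c < s + 2*δ^3 then ν (X, Y) else 0) := by
        split
        · exact hν0 _
        · exact le_refl 0
      have h1 : (if upDist Δ ℓ k X c < s then ν (X, Y) else 0) ≤ ν (X, Y) := by
        split
        · exact le_refl _
        · exact hν0 _
      linarith
    · rw [if_neg hbad]
      simp only [Set.mem_setOf_eq, not_lt] at hbad
      split
      · rename_i hX
        have hd := up_diff_le X Y c
        have hY : upDist Δ ℓ k Y c < s + 2*δ^3 := by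
          have habs := abs_le.1 hd
          have h1 := habs.1
          have h2 := habs.2
          linarith
        rw [if_pos hY]
        simp
      · split
        · simpa using hν0 (X, Y)
        · simp
  calc Msum Δ ℓ k c' c s
      ≤ ∑ X : (Fin ℓ → Fin Δ) → Fin k, ∑ Y : (Fin ℓ → Fin Δ) → Fin k,
          (Set.indicator {q : ((Fin ℓ → Fin Δ) → Fin k) × ((Fin ℓ → Fin Δ) → Fin k) |
            δ ^ 3 < tvDist (upDist Δ ℓ k q.1) (upDist Δ ℓ k q.2)} ν (X, Y)
          + (if upDist Δ ℓ k Y c < s + 2*δ^3 then ν (X, Y) else 0)) := by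
        rw [hD1]
        apply Finset.sum_le_sum
        intro X _
        exact Finset.sum_le_sum (fun Y _ => key X Y)
    _ = (∑ q : ((Fin ℓ → Fin Δ) → Fin k) × ((Fin ℓ → Fin Δ) → Fin k),
          Set.indicator {q : ((Fin ℓ → Fin Δ) → Fin k) × ((Fin ℓ → Fin Δ) → Fin k) |
            δ ^ 3 < tvDist (upDist Δ ℓ k q.1) (upDist Δ ℓ k q.2)} ν q)
        + ∑ X : (Fin ℓ → Fin Δ) → Fin k, ∑ Y : (Fin ℓ → Fin Δ) → Fin k,
            (if upDist Δ ℓ k Y c < s + 2*δ^3 then ν (X, Y) else 0) := by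
        rw [show (∑ X : (Fin ℓ → Fin Δ) → Fin k, ∑ Y : (Fin ℓ → Fin Δ) → Fin k,
          (Set.indicator {q : ((Fin ℓ → Fin Δ) → Fin k) × ((Fin ℓ → Fin Δ) → Fin k) |
            δ ^ 3 < tvDist (upDist Δ ℓ k q.1) (upDist Δ ℓ k q.2)} ν (X, Y)
          + (if upDist Δ ℓ k Y c < s + 2*δ^3 then ν (X, Y) else 0)))
          = (∑ X : (Fin ℓ → Fin Δ) → Fin k, ∑ Y : (Fin ℓ → Fin Δ) → Fin k,
            Set.indicator {q : ((Fin ℓ → Fin Δ) → Fin k) × ((Fin ℓ → Fin Δ) → Fin k) |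
            δ ^ 3 < tvDist (upDist Δ ℓ k q.1) (upDist Δ ℓ k q.2)} ν (X, Y))
          + ∑ X : (Fin ℓ → Fin Δ) → Fin k, ∑ Y : (Fin ℓ → Fin Δ) → Fin k,
            (if upDist Δ ℓ k Y c < s + 2*δ^3 then ν (X, Y) else 0) from by
          rw [← Finset.sum_add_distrib]
          apply Finset.sum_congr rfl
          intro X _
          rw [← Finset.sum_add_distrib]]
        congr 1
        exact (Fintype.sum_prod_type _).symm
    _ ≤ A + Msum Δ ℓ k c'' c (s + 2*δ^3) := by
        apply add_le_add hb
        rw [Finset.sum_comm]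
        unfold Msum
        apply le_of_eq
        apply Finset.sum_congr rfl
        intro Y _
        split
        · exact hν2 Y
        · simp

end MSWaux

namespace MSWaux

open Finset

theorem geom_aux (r : ℝ) (h0 : 0 ≤ r) (h1 : r < 1) (n : ℕ) : ∑ j ∈ range n, r ^ j ≤ 1/(1-r) := by
  rw [geom_sum_eq (by linarith), show (r^n - 1)/(r-1) = (1 - r^n)/(1-r) by
    rw [← neg_div_neg_eq]; ring_nf]
  rw [div_le_div_iff₀ (by linarith) (by linarith)]
  nlinarith [pow_nonneg h0 n]

theorem log3_aux : (16:ℝ)/15 ≤ Real.log 3 := by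
  have h2 : Real.exp (1/15 : ℝ) ≤ 15/14 := by
    have h := Real.add_one_le_exp (-(1/15) : ℝ)
    have hp : (0:ℝ) < Real.exp (1/15) := Real.exp_pos _
    have : Real.exp (-(1/15)) * Real.exp (1/15) = 1 := by
      rw [← Real.exp_add]; simp
    nlinarith
  have h1 : Real.exp (16/15 : ℝ) = Real.exp 1 * Real.exp (1/15) := by
    rw [← Real.exp_add]; norm_num
  have h3 := Real.exp_one_lt_d9
  have hp : (0:ℝ) < Real.exp (1/15) := Real.exp_pos _
  have h : Real.exp (16/15) < 3 := by rw [h1]; nlinarith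
  have := (Real.lt_log_iff_exp_lt (by norm_num : (0:ℝ) < 3)).2 h
  linarith

theorem chord_aux (x : ℝ) (h0 : 0 ≤ x) (h1 : x ≤ 1) : Real.exp (Real.log 3 * x) ≤ 1 + 2*x := by
  have hc := convexOn_exp.2 (Set.mem_univ (0:ℝ)) (Set.mem_univ (Real.log 3))
    (by linarith : (0:ℝ) ≤ 1 - x) h0 (by ring)
  simp only [smul_eq_mul] at hc
  rw [Real.exp_log (by norm_num : (0:ℝ) < 3)] at hc
  calc Real.exp (Real.log 3 * x) = Real.exp ((1-x) * (0:ℝ) + x * Real.log 3) := by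
        ring_nf
      _ ≤ (1-x) * Real.exp 0 + x * 3 := hc
      _ ≤ 1 + 2*x := by simp [Real.exp_zero]; nlinarith

theorem S1_aux (δ M : ℝ) (hδ : 0 < δ) (hδ2 : δ ≤ 1/2)
    (h1 : 4*δ^2*M ≤ 3) (h2 : 3 ≤ 4*δ^2*(M+1)) :
    15/(16*δ) ≤ (M+1)*(2*δ - δ^3*M) := by
  rw [div_le_iff₀ (by positivity)]
  nlinarith [sq_nonneg (4*δ^2*M - 3), sq_nonneg δ, mul_pos hδ hδ, sq_nonneg (2*δ^2*M - 1)]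

/-- the levels -/
noncomputable def eps (δ : ℝ) (i : ℕ) : ℝ := 2*δ - 2*i*δ^3

lemma eps_succ (δ : ℝ) (i : ℕ) : eps δ (i+1) = eps δ i - 2*δ^3 := by
  unfold eps; push_cast; ring

lemma sum_range_cast (n : ℕ) : ∑ i ∈ range n, (i:ℝ) = n*(n-1)/2 := by
  induction n with
  | zero => simp
  | succ n ih => rw [Finset.sum_range_succ, ih]; push_cast; ring

section levels

variable {δ : ℝ} (hδ : 0 < δ)

lemma floor_facts (hδ : 0 < δ) :
    4*δ^2*(Nat.floor (3/(4*δ^2)) : ℝ) ≤ 3 ∧ 3 ≤ 4*δ^2*((Nat.floor (3/(4*δ^2)) : ℝ)+1) := by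
  have hpos : (0:ℝ) < 4*δ^2 := by positivity
  have h1 : (Nat.floor (3/(4*δ^2)) : ℝ) ≤ 3/(4*δ^2) := Nat.floor_le (by positivity)
  have h2 : 3/(4*δ^2) < (Nat.floor (3/(4*δ^2)) : ℝ) + 1 := Nat.lt_floor_add_one _
  constructor
  · rw [mul_comm]
    rw [← le_div_iff₀ hpos]
    exact h1
  · rw [mul_comm (4*δ^2) _]
    rw [← div_le_iff₀ hpos]
    exact h2.le

lemma eps_lb (hδ : 0 < δ) {i : ℕ} (hi : i ≤ Nat.floor (3/(4*δ^2))) : δ/2 ≤ eps δ i := by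
  have h1 : (i : ℝ) ≤ 3/(4*δ^2) :=
    le_trans (by exact_mod_cast Nat.cast_le.2 hi) (Nat.floor_le (by positivity))
  unfold eps
  have h2 : 2*(i:ℝ)*δ^3 ≤ 2*(3/(4*δ^2))*δ^3 := by
    apply mul_le_mul_of_nonneg_right _ (by positivity)
    linarith
  have h3 : 2*(3/(4*δ^2))*δ^3 = 3*δ/2 := by field_simp; ring
  linarith

lemma eps_ub (hδ : 0 < δ) (i : ℕ) : eps δ i ≤ 2*δ := by
  unfold eps
  have : (0:ℝ) ≤ 2*i*δ^3 := by positivity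
  linarith

lemma S1_bound (hδ : 0 < δ) (hhalf : δ ≤ 1/2) :
    15/(16*δ) ≤ ∑ i ∈ range (Nat.floor (3/(4*δ^2)) + 1), eps δ i := by
  set m := Nat.floor (3/(4*δ^2)) with hm
  have hsum : ∑ i ∈ range (m + 1), eps δ i = ((m:ℝ)+1)*(2*δ - δ^3*(m:ℝ)) := by
    unfold eps
    rw [Finset.sum_sub_distrib, Finset.sum_const, Finset.card_range]
    have : ∑ i ∈ range (m+1), 2*(i:ℝ)*δ^3 = 2*δ^3 * ∑ i ∈ range (m+1), (i:ℝ) := by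
      rw [Finset.mul_sum]
      apply Finset.sum_congr rfl
      intro i _
      ring
    rw [this, sum_range_cast]
    push_cast
    ring
  rw [hsum]
  obtain ⟨hf1, hf2⟩ := floor_facts hδ
  exact S1_aux δ (m:ℝ) hδ hhalf hf1 hf2

end levels

end MSWaux

namespace MSWaux

open Finset

variable {Δ ℓ k : ℕ}

lemma upper_tail (hk2 : 2 ≤ k) (c : Fin k) (δ A : ℝ) (hδ : 0 < δ) (hhalf : δ ≤ 1/2)
    (hA : 0 ≤ A)
    (hrec : ∀ s : ℝ, (k:ℝ) * s * Uprob Δ ℓ k c s ≤ A + Uprob Δ ℓ k c (s - 2*δ^3)) :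
    Uprob Δ ℓ k c (1/(k:ℝ) + 2*δ) ≤ Real.exp (-(1/δ)) + A/δ := by
  have hk0 : (0:ℝ) < (k:ℝ) := by
    have : 0 < k := lt_of_lt_of_le (by norm_num) hk2
    exact_mod_cast this
  have hkr : (2:ℝ) ≤ (k:ℝ) := by exact_mod_cast hk2
  set m := Nat.floor (3/(4*δ^2)) with hm
  set s : ℕ → ℝ := fun i => 1/(k:ℝ) + eps δ i with hs
  set C : ℕ → ℝ := fun n => ∏ i ∈ range n, (1 + 2 * eps δ i) with hC
  set T : ℕ → ℝ := fun n => ∑ j ∈ range n, (C (j+1))⁻¹ with hT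
  -- positivity of factors
  have hfac : ∀ i, i ≤ m → 1 + δ ≤ 1 + 2 * eps δ i := by
    intro i hi
    have := eps_lb hδ hi
    linarith
  have hCpos : ∀ n, n ≤ m + 1 → 0 < C n := by
    intro n hn
    apply Finset.prod_pos
    intro i hi
    have hi' : i ≤ m := by
      have := Finset.mem_range.1 hi
      omega
    have := hfac i hi'
    linarith
  -- the one-step recursion
  have hstep : ∀ n, n ≤ m → (1 + 2 * eps δ n) * Uprob Δ ℓ k c (s n)
      ≤ A + Uprob Δ ℓ k c (s (n+1)) := by
    intro n hn
    have h1 := hrec (s n)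
    have h2 : s n - 2*δ^3 = s (n+1) := by
      simp only [hs]
      rw [eps_succ]
      ring
    rw [h2] at h1
    refine le_trans ?_ h1
    have hU := Uprob_nonneg (Δ := Δ) (ℓ := ℓ) c (s n)
    have hks : (k:ℝ) * s n = 1 + (k:ℝ) * eps δ n := by
      simp only [hs]
      field_simp
    have hε : δ/2 ≤ eps δ n := eps_lb hδ hn
    have : 1 + 2 * eps δ n ≤ (k:ℝ) * s n := by
      rw [hks]
      have : 2 * eps δ n ≤ (k:ℝ) * eps δ n := by
        apply mul_le_mul_of_nonneg_right hkr
        linarith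
      linarith
    exact mul_le_mul_of_nonneg_right this hU
  -- main induction
  have main : ∀ n, n ≤ m + 1 →
      Uprob Δ ℓ k c (s 0) ≤ A * T n + (C n)⁻¹ * Uprob Δ ℓ k c (s n) := by
    intro n
    induction n with
    | zero =>
      intro _
      simp only [hT, hC, Finset.range_zero, Finset.sum_empty, Finset.prod_empty, inv_one,
        one_mul, mul_zero, zero_add]
      exact le_refl _
    | succ n ih =>
      intro hn1
      have hnm : n ≤ m := by omega
      have ihh := ih (by omega)
      have hb : (0:ℝ) < 1 + 2 * eps δ n := by
        have := hfac n hnm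
        linarith
      have hCn : 0 < C n := hCpos n (by omega)
      have hCn1 : C (n+1) = C n * (1 + 2 * eps δ n) := by
        simp only [hC]
        rw [Finset.prod_range_succ]
      have hUn : Uprob Δ ℓ k c (s n) ≤ (A + Uprob Δ ℓ k c (s (n+1))) / (1 + 2 * eps δ n) := by
        rw [le_div_iff₀ hb]
        rw [mul_comm]
        exact hstep n hnm
      have h3 : (C n)⁻¹ * Uprob Δ ℓ k c (s n)
          ≤ (C n)⁻¹ * ((A + Uprob Δ ℓ k c (s (n+1))) / (1 + 2 * eps δ n)) :=
        mul_le_mul_of_nonneg_left hUn (by positivity)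
      have h4 : (C n)⁻¹ * ((A + Uprob Δ ℓ k c (s (n+1))) / (1 + 2 * eps δ n))
          = A * (C (n+1))⁻¹ + (C (n+1))⁻¹ * Uprob Δ ℓ k c (s (n+1)) := by
        rw [hCn1, mul_inv]
        have hb' : (1 + 2*eps δ n) ≠ 0 := ne_of_gt hb
        have hC' : C n ≠ 0 := ne_of_gt hCn
        field_simp
      have h5 : T (n+1) = T n + (C (n+1))⁻¹ := by
        simp only [hT]
        rw [Finset.sum_range_succ]
      rw [h5]
      calc Uprob Δ ℓ k c (s 0) ≤ A * T n + (C n)⁻¹ * Uprob Δ ℓ k c (s n) := ihh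
        _ ≤ A * T n + (A * (C (n+1))⁻¹ + (C (n+1))⁻¹ * Uprob Δ ℓ k c (s (n+1))) := by
            rw [← h4]; linarith
        _ = A * (T n + (C (n+1))⁻¹) + (C (n+1))⁻¹ * Uprob Δ ℓ k c (s (n+1)) := by ring
  have final := main (m+1) (le_refl _)
  -- bound T (m+1) ≤ 1/δ
  have hTbound : T (m+1) ≤ 1/δ := by
    have h1 : ∀ j, j ≤ m → (C (j+1))⁻¹ ≤ ((1+δ)⁻¹)^(j+1) := by
      intro j hj
      have hCj : (1+δ)^(j+1) ≤ C (j+1) := by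
        simp only [hC]
        rw [show (1+δ)^(j+1) = ∏ i ∈ range (j+1), (1+δ) by
          rw [Finset.prod_const, Finset.card_range]]
        apply Finset.prod_le_prod
        · intro i _; positivity
        · intro i hi
          have hi' := Finset.mem_range.1 hi
          exact hfac i (by omega)
      rw [inv_pow]
      exact inv_anti₀ (by positivity) hCj
    calc T (m+1) ≤ ∑ j ∈ range (m+1), ((1+δ)⁻¹)^(j+1) := by
          apply Finset.sum_le_sum
          intro j hj
          have hj' := Finset.mem_range.1 hj
          exact h1 j (by omega)
      _ = (1+δ)⁻¹ * ∑ j ∈ range (m+1), ((1+δ)⁻¹)^j := by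
          rw [Finset.mul_sum]
          apply Finset.sum_congr rfl
          intro j _
          rw [pow_succ]
          ring
      _ ≤ (1+δ)⁻¹ * (1/(1 - (1+δ)⁻¹)) := by
          apply mul_le_mul_of_nonneg_left _ (by positivity)
          apply geom_aux
          · positivity
          · rw [inv_lt_one_iff₀]
            right
            linarith
      _ = 1/δ := by
          rw [inv_eq_one_div]
          field_simp
          simp [hδ.ne']
  -- bound (C (m+1))⁻¹ ≤ exp(-(1/δ))
  have hCbound : (C (m+1))⁻¹ ≤ Real.exp (-(1/δ)) := by
    have hS1 := S1_bound hδ hhalf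
    have hCge : Real.exp (1/δ) ≤ C (m+1) := by
      have h1 : C (m+1) ≥ ∏ i ∈ range (m+1), Real.exp (Real.log 3 * eps δ i) := by
        apply Finset.prod_le_prod
        · intro i _; positivity
        · intro i hi
          have hi' := Finset.mem_range.1 hi
          apply chord_aux
          · have := eps_lb hδ (by omega : i ≤ m)
            linarith
          · have := eps_ub hδ i
            linarith
      have h2 : ∏ i ∈ range (m+1), Real.exp (Real.log 3 * eps δ i)
          = Real.exp (∑ i ∈ range (m+1), Real.log 3 * eps δ i) := by
        rw [Real.exp_sum]
      have h3 : ∑ i ∈ range (m+1), Real.log 3 * eps δ i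
          = Real.log 3 * ∑ i ∈ range (m+1), eps δ i := by
        rw [Finset.mul_sum]
      have h4 : 1/δ ≤ Real.log 3 * ∑ i ∈ range (m+1), eps δ i := by
        have hl3 := log3_aux
        have hS1' : 0 ≤ ∑ i ∈ range (m+1), eps δ i := by
          have : (0:ℝ) < 15/(16*δ) := by positivity
          linarith
        calc (1:ℝ)/δ = (16/15) * (15/(16*δ)) := by field_simp
          _ ≤ Real.log 3 * (15/(16*δ)) := by
              apply mul_le_mul_of_nonneg_right hl3 (by positivity)
          _ ≤ Real.log 3 * ∑ i ∈ range (m+1), eps δ i := by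
              apply mul_le_mul_of_nonneg_left hS1
              linarith
      calc Real.exp (1/δ) ≤ Real.exp (Real.log 3 * ∑ i ∈ range (m+1), eps δ i) :=
            Real.exp_le_exp.2 h4
        _ = ∏ i ∈ range (m+1), Real.exp (Real.log 3 * eps δ i) := by rw [h2, h3]
        _ ≤ C (m+1) := h1
    rw [Real.exp_neg]
    exact inv_anti₀ (Real.exp_pos _) hCge
  have hU1 : Uprob Δ ℓ k c (s (m+1)) ≤ 1 := Uprob_le_one c _
  have hs0 : s 0 = 1/(k:ℝ) + 2*δ := by
    simp only [hs]
    unfold eps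
    norm_num
  rw [← hs0]
  have hCpos1 : 0 < C (m+1) := hCpos (m+1) (le_refl _)
  calc Uprob Δ ℓ k c (s 0) ≤ A * T (m+1) + (C (m+1))⁻¹ * Uprob Δ ℓ k c (s (m+1)) := final
    _ ≤ A * (1/δ) + Real.exp (-(1/δ)) * 1 := by
        apply add_le_add
        · exact mul_le_mul_of_nonneg_left hTbound hA
        · apply mul_le_mul hCbound hU1 (Uprob_nonneg c _) (Real.exp_pos _).le
    _ = Real.exp (-(1/δ)) + A/δ := by ring

end MSWaux

namespace MSWaux

open Finset

variable {Δ ℓ k : ℕ}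

lemma lower_tail (hk2 : 2 ≤ k) (c : Fin k) (δ A : ℝ) (hδ : 0 < δ) (hq : δ ≤ 1/4)
    (hA : 0 ≤ A)
    (hrec : ∀ t : ℝ, Lprob Δ ℓ k c t ≤ A + (k:ℝ) * (t + 2*δ^3) * Lprob Δ ℓ k c (t + 2*δ^3)) :
    Lprob Δ ℓ k c (1/(k:ℝ) - 2*δ) ≤ Real.exp (-(1/δ)) + A/δ := by
  have hk0 : (0:ℝ) < (k:ℝ) := by
    have : 0 < k := lt_of_lt_of_le (by norm_num) hk2
    exact_mod_cast this
  have hkr : (2:ℝ) ≤ (k:ℝ) := by exact_mod_cast hk2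
  have hhalf : δ ≤ 1/2 := by linarith
  set m := Nat.floor (3/(4*δ^2)) with hm
  set t : ℕ → ℝ := fun i => 1/(k:ℝ) - eps δ i with ht
  set B : ℕ → ℝ := fun n => ∏ j ∈ range n, (1 - 2 * eps δ (j+1)) with hB
  set T : ℕ → ℝ := fun n => ∑ j ∈ range n, B j with hT
  have hfac : ∀ i, i ≤ m → 0 ≤ 1 - 2 * eps δ i ∧ 1 - 2 * eps δ i ≤ 1 - δ := by
    intro i hi
    have h1 := eps_lb hδ hi
    have h2 := eps_ub hδ i
    constructor <;> linarith
  have hBnonneg : ∀ n, n ≤ m → 0 ≤ B n := by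
    intro n hn
    apply Finset.prod_nonneg
    intro j hj
    have hj' := Finset.mem_range.1 hj
    exact (hfac (j+1) (by omega)).1
  -- one-step
  have hstep : ∀ n, n + 1 ≤ m → Lprob Δ ℓ k c (t n)
      ≤ A + (1 - 2 * eps δ (n+1)) * Lprob Δ ℓ k c (t (n+1)) := by
    intro n hn
    have h1 := hrec (t n)
    have h2 : t n + 2*δ^3 = t (n+1) := by
      simp only [ht]
      rw [eps_succ]
      ring
    rw [h2] at h1
    refine le_trans h1 ?_
    have hL := Lprob_nonneg (Δ := Δ) (ℓ := ℓ) c (t (n+1))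
    have hkt : (k:ℝ) * t (n+1) = 1 - (k:ℝ) * eps δ (n+1) := by
      simp only [ht]
      field_simp
    have hεb : δ/2 ≤ eps δ (n+1) := eps_lb hδ hn
    have hcoef : (k:ℝ) * t (n+1) ≤ 1 - 2 * eps δ (n+1) := by
      rw [hkt]
      have : 2 * eps δ (n+1) ≤ (k:ℝ) * eps δ (n+1) := by
        apply mul_le_mul_of_nonneg_right hkr
        linarith
      linarith
    have := mul_le_mul_of_nonneg_right hcoef hL
    linarith
  -- main induction
  have main : ∀ n, n ≤ m →
      Lprob Δ ℓ k c (t 0) ≤ A * T n + B n * Lprob Δ ℓ k c (t n) := by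
    intro n
    induction n with
    | zero =>
      intro _
      simp only [hT, hB, Finset.range_zero, Finset.sum_empty, Finset.prod_empty,
        one_mul, mul_zero, zero_add]
      exact le_refl _
    | succ n ih =>
      intro hn1
      have ihh := ih (by omega)
      have hBn : 0 ≤ B n := hBnonneg n (by omega)
      have hBn1 : B (n+1) = B n * (1 - 2 * eps δ (n+1)) := by
        simp only [hB]
        rw [Finset.prod_range_succ]
      have hTn1 : T (n+1) = T n + B n := by
        simp only [hT]
        rw [Finset.sum_range_succ]
      have h3 := mul_le_mul_of_nonneg_left (hstep n hn1) hBn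
      calc Lprob Δ ℓ k c (t 0) ≤ A * T n + B n * Lprob Δ ℓ k c (t n) := ihh
        _ ≤ A * T n + B n * (A + (1 - 2 * eps δ (n+1)) * Lprob Δ ℓ k c (t (n+1))) := by
            linarith
        _ = A * (T n + B n) + (B n * (1 - 2 * eps δ (n+1))) * Lprob Δ ℓ k c (t (n+1)) := by
            ring
        _ = A * T (n+1) + B (n+1) * Lprob Δ ℓ k c (t (n+1)) := by
            rw [hTn1, hBn1]
  have final := main m (le_refl _)
  -- T m ≤ 1/δ
  have hTbound : T m ≤ 1/δ := by
    have h1 : ∀ j, j ≤ m → B j ≤ (1-δ)^j := by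
      intro j hj
      simp only [hB]
      rw [show (1-δ)^j = ∏ i ∈ range j, (1-δ) by rw [Finset.prod_const, Finset.card_range]]
      apply Finset.prod_le_prod
      · intro i hi
        have hi' := Finset.mem_range.1 hi
        exact (hfac (i+1) (by omega)).1
      · intro i hi
        have hi' := Finset.mem_range.1 hi
        exact (hfac (i+1) (by omega)).2
    calc T m ≤ ∑ j ∈ range m, (1-δ)^j := by
          apply Finset.sum_le_sum
          intro j hj
          have hj' := Finset.mem_range.1 hj
          exact h1 j (by omega)
      _ ≤ 1/(1-(1-δ)) := geom_aux _ (by linarith) (by linarith) m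
      _ = 1/δ := by norm_num
  -- B m ≤ exp (-(1/δ))
  have hBbound : B m ≤ Real.exp (-(1/δ)) := by
    have hS1 := S1_bound hδ hhalf
    have hsum' : ∑ i ∈ range (m+1), eps δ i = (∑ j ∈ range m, eps δ (j+1)) + eps δ 0 :=
      Finset.sum_range_succ' _ _
    have heps0 : eps δ 0 = 2*δ := by unfold eps; norm_num
    have h1 : B m ≤ ∏ j ∈ range m, Real.exp (-(2 * eps δ (j+1))) := by
      simp only [hB]
      apply Finset.prod_le_prod
      · intro j hj
        have hj' := Finset.mem_range.1 hj
        exact (hfac (j+1) (by omega)).1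
      · intro j hj
        have := Real.add_one_le_exp (-(2 * eps δ (j+1)))
        linarith
    have h2 : ∏ j ∈ range m, Real.exp (-(2 * eps δ (j+1)))
        = Real.exp (∑ j ∈ range m, -(2 * eps δ (j+1))) := by rw [Real.exp_sum]
    have h3 : ∑ j ∈ range m, -(2 * eps δ (j+1)) = -(2 * ∑ j ∈ range m, eps δ (j+1)) := by
      rw [Finset.mul_sum, ← Finset.sum_neg_distrib]
    have hSS : 15/(16*δ) - 2*δ ≤ ∑ j ∈ range m, eps δ (j+1) := by
      have := hsum'
      rw [heps0] at this
      linarith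
    have key : 1/δ ≤ 2 * (15/(16*δ) - 2*δ) := by
      have h32 : 32*δ^2 ≤ 7 := by nlinarith
      have hdiff : 2 * (15/(16*δ) - 2*δ) - 1/δ = (7 - 32*δ^2)/(8*δ) := by
        field_simp
        ring
      have hpos : 0 ≤ (7 - 32*δ^2)/(8*δ) := by
        apply div_nonneg (by linarith) (by positivity)
      linarith
    have h4 : -(2 * ∑ j ∈ range m, eps δ (j+1)) ≤ -(1/δ) := by
      have h5 : 1/δ ≤ 2 * ∑ j ∈ range m, eps δ (j+1) := by
        calc 1/δ ≤ 2 * (15/(16*δ) - 2*δ) := key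
          _ ≤ 2 * ∑ j ∈ range m, eps δ (j+1) := by linarith
      linarith
    calc B m ≤ ∏ j ∈ range m, Real.exp (-(2 * eps δ (j+1))) := h1
      _ = Real.exp (∑ j ∈ range m, -(2 * eps δ (j+1))) := h2
      _ ≤ Real.exp (-(1/δ)) := by
          apply Real.exp_le_exp.2
          rw [h3]
          exact h4
  have ht0 : t 0 = 1/(k:ℝ) - 2*δ := by
    simp only [ht]
    unfold eps
    norm_num
  rw [← ht0]
  have hL1 : Lprob Δ ℓ k c (t m) ≤ 1 := Lprob_le_one c _
  have hLnn : 0 ≤ Lprob Δ ℓ k c (t m) := Lprob_nonneg c _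
  calc Lprob Δ ℓ k c (t 0) ≤ A * T m + B m * Lprob Δ ℓ k c (t m) := final
    _ ≤ A * (1/δ) + Real.exp (-(1/δ)) * 1 := by
        apply add_le_add
        · exact mul_le_mul_of_nonneg_left hTbound hA
        · exact mul_le_mul hBbound hL1 hLnn (Real.exp_pos _).le
    _ = Real.exp (-(1/δ)) + A/δ := by ring

end MSWaux

open Finset MSWaux

/-- Lemma 18 of the paper, from Martinelli-Sinclair-Weitz: a tail
bound on the `μ↑` total variation distance in couplings of the `μ↓` distributions implies
concentration of the root bias over a random boundary. -/
theorem coupling_to_concentration (Δ k : ℕ) (hΔ : 2 ≤ Δ) (hk : 2 ≤ k) (ℓ : ℕ)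
    (δ A : ℝ) (hδ : 0 < δ) (hA : 0 ≤ A)
    (hcoup : ∀ c₁ c₂ : Fin k,
      ∃ ν : ((Fin ℓ → Fin Δ) → Fin k) × ((Fin ℓ → Fin Δ) → Fin k) → ℝ,
        IsCoupling ν (downDist Δ ℓ k c₁) (downDist Δ ℓ k c₂) ∧
        (∑ q : ((Fin ℓ → Fin Δ) → Fin k) × ((Fin ℓ → Fin Δ) → Fin k),
          Set.indicator {q : ((Fin ℓ → Fin Δ) → Fin k) × ((Fin ℓ → Fin Δ) → Fin k) |
              δ ^ 3 < tvDist (upDist Δ ℓ k q.1) (upDist Δ ℓ k q.2)} ν q) ≤ A) :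
    ∀ c : Fin k,
      treeProb Δ ℓ k (fun σ => 2 * δ < |upDist Δ ℓ k (leafColoring σ) c - 1 / (k : ℝ)|) ≤
        2 * (Real.exp (-1 / δ) + A / δ) := by
  intro c
  classical
  have hk0 : 0 < k := lt_of_lt_of_le (by norm_num) hk
  have hkr : (0:ℝ) < (k:ℝ) := by exact_mod_cast hk0
  have hkr2 : (2:ℝ) ≤ (k:ℝ) := by exact_mod_cast hk
  -- the upper recursion
  have hrecU : ∀ s : ℝ, (k:ℝ) * s * Uprob Δ ℓ k c s ≤ A + Uprob Δ ℓ k c (s - 2*δ^3) := by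
    intro s
    have hu1 := u1 (Δ := Δ) (ℓ := ℓ) hk0 c s
    have hDs : Dsum Δ ℓ k c c s ≤ A + Uprob Δ ℓ k c (s - 2*δ^3) := by
      have hsum : ∀ c'' : Fin k, Dsum Δ ℓ k c c s ≤ A + Dsum Δ ℓ k c'' c (s - 2*δ^3) := by
        intro c''
        obtain ⟨ν, hν, hb⟩ := hcoup c c''
        exact u2 c c'' c s ν hν hb
      have hall : ∑ _c'' : Fin k, Dsum Δ ℓ k c c s
          ≤ ∑ c'' : Fin k, (A + Dsum Δ ℓ k c'' c (s - 2*δ^3)) :=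
        Finset.sum_le_sum (fun c'' _ => hsum c'')
      rw [Finset.sum_const, Finset.card_univ, Fintype.card_fin, nsmul_eq_mul] at hall
      rw [Finset.sum_add_distrib, Finset.sum_const, Finset.card_univ, Fintype.card_fin,
        nsmul_eq_mul, u3 hk0 c (s - 2*δ^3)] at hall
      have h2 : (k:ℝ) * Dsum Δ ℓ k c c s ≤ (k:ℝ) * (A + Uprob Δ ℓ k c (s - 2*δ^3)) := by
        rw [mul_add]
        exact hall
      exact le_of_mul_le_mul_left h2 hkr
    linarith
  -- the lower recursion
  have hrecL : ∀ t : ℝ, Lprob Δ ℓ k c t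
      ≤ A + (k:ℝ) * (t + 2*δ^3) * Lprob Δ ℓ k c (t + 2*δ^3) := by
    intro t
    have hsum : ∀ c' : Fin k, Msum Δ ℓ k c' c t ≤ A + Msum Δ ℓ k c c (t + 2*δ^3) := by
      intro c'
      obtain ⟨ν, hν, hb⟩ := hcoup c' c
      exact l2 c' c c t ν hν hb
    have hall : ∑ c' : Fin k, Msum Δ ℓ k c' c t
        ≤ ∑ _c' : Fin k, (A + Msum Δ ℓ k c c (t + 2*δ^3)) :=
      Finset.sum_le_sum (fun c' _ => hsum c')
    rw [l3 hk0 c t, Finset.sum_const, Finset.card_univ, Fintype.card_fin, nsmul_eq_mul] at hall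
    have hM1 := l1 (Δ := Δ) (ℓ := ℓ) hk0 c (t + 2*δ^3)
    have h2 : (k:ℝ) * Lprob Δ ℓ k c t
        ≤ (k:ℝ) * (A + (k:ℝ) * (t + 2*δ^3) * Lprob Δ ℓ k c (t + 2*δ^3)) := by
      calc (k:ℝ) * Lprob Δ ℓ k c t ≤ (k:ℝ) * (A + Msum Δ ℓ k c c (t + 2*δ^3)) := hall
        _ ≤ (k:ℝ) * (A + (k:ℝ) * (t + 2*δ^3) * Lprob Δ ℓ k c (t + 2*δ^3)) := by
            apply mul_le_mul_of_nonneg_left _ hkr.le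
            linarith
    exact le_of_mul_le_mul_left h2 hkr
  -- split the event
  have hsplit : treeProb Δ ℓ k
        (fun σ => 2 * δ < |upDist Δ ℓ k (leafColoring σ) c - 1 / (k : ℝ)|)
      ≤ Uprob Δ ℓ k c (1/(k:ℝ) + 2*δ) + Lprob Δ ℓ k c (1/(k:ℝ) - 2*δ) := by
    rw [treeProb_leaf (fun X => 2 * δ < |upDist Δ ℓ k X c - 1 / (k : ℝ)|)]
    unfold Uprob Lprob
    rw [← add_div]
    apply div_mono_num (by positivity)
    rw [← Finset.sum_add_distrib]
    apply Finset.sum_le_sum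
    intro X _
    have hnn0 : (0:ℝ) ≤ (nn Δ ℓ k X : ℝ) := by positivity
    have hu : (0:ℝ) ≤ (if 1/(k:ℝ) + 2*δ < upDist Δ ℓ k X c then (nn Δ ℓ k X : ℝ) else 0) := by
      split
      · exact hnn0
      · exact le_refl 0
    have hl : (0:ℝ) ≤ (if upDist Δ ℓ k X c < 1/(k:ℝ) - 2*δ then (nn Δ ℓ k X : ℝ) else 0) := by
      split
      · exact hnn0
      · exact le_refl 0
    split
    · rename_i hE
      rcases lt_abs.1 hE with hcase | hcase
      · have h1 : 1/(k:ℝ) + 2*δ < upDist Δ ℓ k X c := by linarith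
        rw [if_pos h1]
        linarith
      · have h1 : upDist Δ ℓ k X c < 1/(k:ℝ) - 2*δ := by linarith
        rw [if_pos h1]
        linarith
    · linarith
  -- upper tail bound
  have hup : Uprob Δ ℓ k c (1/(k:ℝ) + 2*δ) ≤ Real.exp (-(1/δ)) + A/δ := by
    by_cases hcase : 1 ≤ 1/(k:ℝ) + 2*δ
    · have hz : Uprob Δ ℓ k c (1/(k:ℝ) + 2*δ) = 0 := by
        unfold Uprob
        rw [Finset.sum_eq_zero, zero_div]
        intro X _
        rw [if_neg]
        push_neg
        exact le_trans (upDist_le_one X c) hcase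
      rw [hz]
      positivity
    · push_neg at hcase
      have hinvk : (0:ℝ) < 1/(k:ℝ) := by positivity
      have hhalf : δ ≤ 1/2 := by linarith
      exact upper_tail hk c δ A hδ hhalf hA hrecU
  -- lower tail bound
  have hlo : Lprob Δ ℓ k c (1/(k:ℝ) - 2*δ) ≤ Real.exp (-(1/δ)) + A/δ := by
    by_cases hcase : 1/(k:ℝ) - 2*δ ≤ 0
    · have hz : Lprob Δ ℓ k c (1/(k:ℝ) - 2*δ) = 0 := by
        unfold Lprob
        rw [Finset.sum_eq_zero, zero_div]
        intro X _
        rw [if_neg]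
        push_neg
        exact le_trans hcase (upDist_nonneg X c)
      rw [hz]
      positivity
    · push_neg at hcase
      have hinvk : 1/(k:ℝ) ≤ 1/2 := by
        rw [div_le_div_iff₀ hkr (by norm_num)]
        linarith
      have hq : δ ≤ 1/4 := by linarith
      exact lower_tail hk c δ A hδ hq hA hrecL
  have hneg : (-1:ℝ)/δ = -(1/δ) := by ring
  calc treeProb Δ ℓ k (fun σ => 2 * δ < |upDist Δ ℓ k (leafColoring σ) c - 1 / (k : ℝ)|)
      ≤ Uprob Δ ℓ k c (1/(k:ℝ) + 2*δ) + Lprob Δ ℓ k c (1/(k:ℝ) - 2*δ) := hsplit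
    _ ≤ (Real.exp (-(1/δ)) + A/δ) + (Real.exp (-(1/δ)) + A/δ) := add_le_add hup hlo
    _ = 2 * (Real.exp (-1/δ) + A / δ) := by rw [hneg]; ring
end
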